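/- arXiv:1711.04466 — 3 statements merged into one kernel-verified Lean document; each statement's English description precedes it below -/
import Mathlib

section
/- Let Y be a discrete random variable and T a finite set of discrete random variables with Y ∉ T, with joint probability mass function f. Let Θ denote the set of all Markov boundaries of Y within T. Suppose X ∈ (⋃_{M ∈ Θ} M) \ (⋂_{M ∈ Θ} M), and let K = T \ {X}. Then X and K are variation dependent: there exist a value x of X and a value k of the collection K such that f(x) > 0, f(k) > 0, but f(x, k) = 0. -/
open scoped BigOperators

noncomputable section

/-- `p` is a probability mass function on the finite type `Ω`. -/
def IsDist {Ω : Type*} [Fintype Ω] (p : Ω → ℝ) : Prop :=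
  (∀ w, 0 ≤ p w) ∧ ∑ w, p w = 1

/-- Total variation distance between two distributions on the same finite type. -/
def tvDist {Ω : Type*} [Fintype Ω] (p q : Ω → ℝ) : ℝ :=
  (∑ w, |p w - q w|) / 2

variable {ι : Type*} [Fintype ι] [DecidableEq ι]
variable {α : ι → Type*} [∀ i, Fintype (α i)] [∀ i, DecidableEq (α i)]

/-- Marginal probability, under joint pmf `p`, of the event that the variables in the
collection `A` take the values prescribed by the configuration `x`. -/
def margProb (p : (∀ i, α i) → ℝ) (A : Finset ι) (x : ∀ i, α i) : ℝ :=
  ∑ w : ∀ i, α i, if ∀ i ∈ A, w i = x i then p w else 0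

/-- Conditional independence of the collections `A` and `B` given the collection `C`:
`f(a, b | c) = f(a | c) f(b | c)` whenever `f(c) > 0` (stated in multiplied-out form). -/
def CondIndep (p : (∀ i, α i) → ℝ) (A B C : Finset ι) : Prop :=
  ∀ x : ∀ i, α i, 0 < margProb p C x →
    margProb p (A ∪ B ∪ C) x * margProb p C x =
      margProb p (A ∪ C) x * margProb p (B ∪ C) x

/-- `M` is a Markov blanket of the variable `y` within the collection `T`. -/
def MarkovBlanket (p : (∀ i, α i) → ℝ) (y : ι) (T M : Finset ι) : Prop :=
  M ⊆ T ∧ CondIndep p {y} (T \ M) M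

/-- `M` is a Markov boundary of `y` within `T`: a Markov blanket no proper subset of
which is a Markov blanket. -/
def MarkovBoundary (p : (∀ i, α i) → ℝ) (y : ι) (T M : Finset ι) : Prop :=
  MarkovBlanket p y T M ∧ ∀ M' ⊂ M, ¬ MarkovBlanket p y T M'

/-- Mutual information between the collections `A` and `B`
(with the convention `0 · log(junk) = 0` on zero-probability terms). -/
def MI (p : (∀ i, α i) → ℝ) (A B : Finset ι) : ℝ :=
  ∑ w : ∀ i, α i, p w *
    Real.log (margProb p (A ∪ B) w / (margProb p A w * margProb p B w))

/-- Conditional mutual information between collections `A` and `B` given `C`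
(with the convention `0 · log(junk) = 0` on zero-probability terms). -/
def CMI (p : (∀ i, α i) → ℝ) (A B C : Finset ι) : ℝ :=
  ∑ w : (∀ i, α i), p w *
    Real.log ((margProb p (A ∪ B ∪ C) w * margProb p C w) /
      (margProb p (A ∪ C) w * margProb p (B ∪ C) w))


variable [∀ i, Nonempty (α i)]


lemma margProb_nonneg (p : (∀ i, α i) → ℝ) (hp : ∀ w, 0 ≤ p w) (A : Finset ι)
    (x : ∀ i, α i) : 0 ≤ margProb p A x := by
  refine Finset.sum_nonneg fun w _ => ?_
  split
  · exact hp w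
  · exact le_rfl

lemma margProb_mono (p : (∀ i, α i) → ℝ) (hp : ∀ w, 0 ≤ p w) {A B : Finset ι}
    (hAB : A ⊆ B) (x : ∀ i, α i) : margProb p B x ≤ margProb p A x := by
  refine Finset.sum_le_sum fun w _ => ?_
  by_cases h : ∀ i ∈ B, w i = x i
  · rw [if_pos h, if_pos fun i hi => h i (hAB hi)]
  · rw [if_neg h]
    split
    · exact hp w
    · exact le_rfl

lemma le_margProb (p : (∀ i, α i) → ℝ) (hp : ∀ w, 0 ≤ p w) (A : Finset ι)
    (w : ∀ i, α i) : p w ≤ margProb p A w := by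
  have h := Finset.single_le_sum
    (f := fun w' : ∀ i, α i => if ∀ i ∈ A, w' i = w i then p w' else 0)
    (fun v _ => by split; exacts [hp v, le_rfl]) (Finset.mem_univ w)
  simpa [margProb] using h

lemma margProb_exists_pos (p : (∀ i, α i) → ℝ) {A : Finset ι} {x : ∀ i, α i}
    (h : 0 < margProb p A x) : ∃ w, 0 < p w ∧ ∀ i ∈ A, w i = x i := by
  by_contra hc
  push_neg at hc
  have hle : margProb p A x ≤ 0 := by
    refine Finset.sum_nonpos fun w _ => ?_
    split
    · rename_i hw
      by_contra hpw
      push_neg at hpw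
      obtain ⟨i, hi, hne⟩ := hc w hpw
      exact hne (hw i hi)
    · exact le_rfl
  linarith

lemma margProb_congr (p : (∀ i, α i) → ℝ) {A : Finset ι} {x x' : ∀ i, α i}
    (h : ∀ i ∈ A, x i = x' i) : margProb p A x = margProb p A x' := by
  refine Finset.sum_congr rfl fun w _ => ?_
  refine if_congr ?_ rfl rfl
  constructor <;> intro hh i hi
  · rw [hh i hi, h i hi]
  · rw [hh i hi, h i hi]

lemma margProb_marginalize (p : (∀ i, α i) → ℝ) {A B D : Finset ι} (hAB : A ⊆ B)
    (hD : B \ A = D) (x : ∀ i, α i) :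
    margProb p A x = ∑ σ : ∀ i : {j // j ∈ D}, α i,
      margProb p B (fun i => if h : i ∈ D then σ ⟨i, h⟩ else x i) := by
  subst hD
  unfold margProb
  rw [Finset.sum_comm]
  refine Finset.sum_congr rfl fun w _ => ?_
  symm
  have key : ∀ σ : ∀ i : {j // j ∈ B \ A}, α i,
      (∀ i ∈ B, w i = (fun i => if h : i ∈ B \ A then σ ⟨i, h⟩ else x i) i) ↔
      ((∀ i ∈ A, w i = x i) ∧ σ = fun j : {j // j ∈ B \ A} => w j.1) := by
    intro σ
    constructor
    · intro h
      constructor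
      · intro i hi
        have := h i (hAB hi)
        simpa [Finset.mem_sdiff, hi] using this
      · funext j
        have := h j.1 (Finset.mem_sdiff.mp j.2).1
        simp only [j.2, dif_pos] at this
        rw [← this]
    · rintro ⟨h1, rfl⟩ i hi
      by_cases hd : i ∈ B \ A
      · simp [hd]
      · have hiA : i ∈ A := by
          rcases Finset.mem_sdiff.not.mp hd with h'
          push_neg at h'
          exact h' hi
        simp [hd, h1 i hiA]
  calc (∑ σ : ∀ i : {j // j ∈ B \ A}, α i,
        if ∀ i ∈ B, w i = (fun i => if h : i ∈ B \ A then σ ⟨i, h⟩ else x i) i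
        then p w else 0)
      = ∑ σ : ∀ i : {j // j ∈ B \ A}, α i,
        if ((∀ i ∈ A, w i = x i) ∧ σ = fun j : {j // j ∈ B \ A} => w j.1) then p w else 0 := by
        refine Finset.sum_congr rfl fun σ _ => if_congr (key σ) rfl rfl
    _ = if ∀ i ∈ A, w i = x i then p w else 0 := by
        by_cases hP : ∀ i ∈ A, w i = x i
        · rw [if_pos hP]
          trans (∑ σ : ∀ i : {j // j ∈ B \ A}, α i,
            if σ = (fun j : {j // j ∈ B \ A} => w j.1) then p w else 0)
          · exact Finset.sum_congr rfl fun σ _ => if_congr (and_iff_right hP) rfl rfl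
          · simpa using Finset.sum_ite_eq' (Finset.univ : Finset (∀ i : {j // j ∈ B \ A}, α i))
              (fun j : {j // j ∈ B \ A} => w j.1) (fun _ => p w)
        · rw [if_neg hP]
          exact Finset.sum_eq_zero fun σ _ => if_neg (by tauto)

/-- Lemma 1: if `X` belongs to some but not every Markov boundary of `Y`
within `T`, then `X` and `K = T \ {X}` are variation dependent: there are a value `u X`
of `X` and a value `v` of the collection `K` each of positive marginal probability whose
combination has zero probability. -/
theorem markov_boundary_multiplicity_variation_dependent
    (p : (∀ i, α i) → ℝ) (hp : IsDist p)
    (y X : ι) (T : Finset ι) (hyT : y ∉ T)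
    (hin : ∃ M, MarkovBoundary p y T M ∧ X ∈ M)
    (hout : ∃ M, MarkovBoundary p y T M ∧ X ∉ M) :
    ∃ u v : ∀ i, α i,
      0 < margProb p {X} u ∧
      0 < margProb p (T.erase X) v ∧
      margProb p (insert X (T.erase X)) (Function.update v X (u X)) = 0 := by
  obtain ⟨M₁, hM₁, hXM₁⟩ := hin
  obtain ⟨M₂, hM₂, hXM₂⟩ := hout
  obtain ⟨hp0, -⟩ := hp
  by_contra hcon
  push_neg at hcon
  set K := T.erase X with hKdef
  have hXT : X ∈ T := hM₁.1.1 hXM₁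
  have hKT : K ⊆ T := Finset.erase_subset _ _
  have hyX : y ≠ X := fun h => hyT (h ▸ hXT)
  have hyK : y ∉ K := fun h => hyT (hKT h)
  have hIns : insert X K = T := Finset.insert_erase hXT
  have hsupp : ∀ u v : ∀ i, α i, 0 < margProb p {X} u → 0 < margProb p K v →
      0 < margProb p T (Function.update v X (u X)) := by
    intro u v hu hv
    have h := hcon u v hu hv
    rw [hIns] at h
    exact lt_of_le_of_ne (margProb_nonneg p hp0 T _) (Ne.symm h)
  have hTK : T \ K = {X} := by
    ext i
    simp only [hKdef, Finset.mem_sdiff, Finset.mem_erase, Finset.mem_singleton, not_and]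
    constructor
    · rintro ⟨hiT, h2⟩
      by_contra hne
      exact (h2 hne) hiT
    · rintro rfl
      exact ⟨hXT, fun h => absurd rfl h⟩
  have hyTK : ({y} ∪ T) \ ({y} ∪ K) = {X} := by
    rw [← hTK]
    ext i
    by_cases hiy : i = y
    · subst hiy
      simp [hyT, hyK]
    · simp [hiy]
  -- hypotheses in multiplied-out form on the full sets
  have H2 : ∀ w, 0 < margProb p M₁ w →
      margProb p ({y} ∪ T) w * margProb p M₁ w =
      margProb p ({y} ∪ M₁) w * margProb p T w := by
    intro w hw
    have h := hM₁.1.2 w hw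
    rwa [Finset.union_assoc, Finset.sdiff_union_of_subset hM₁.1.1] at h
  have hM₂' : ∀ w, 0 < margProb p M₂ w →
      margProb p ({y} ∪ T) w * margProb p M₂ w =
      margProb p ({y} ∪ M₂) w * margProb p T w := by
    intro w hw
    have h := hM₂.1.2 w hw
    rwa [Finset.union_assoc, Finset.sdiff_union_of_subset hM₂.1.1] at h
  have hM₂K : M₂ ⊆ K := Finset.subset_erase.mpr ⟨hM₂.1.1, hXM₂⟩
  -- weak union: Y ⟂ X | K
  have H1 : ∀ w, 0 < margProb p K w →
      margProb p ({y} ∪ T) w * margProb p K w =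
      margProb p ({y} ∪ K) w * margProb p T w := by
    intro w hKw
    have hM₂w : 0 < margProb p M₂ w := lt_of_lt_of_le hKw (margProb_mono p hp0 hM₂K w)
    have hfK : margProb p K w = ∑ σ : ∀ i : {j // j ∈ ({X} : Finset ι)}, α i,
        margProb p T (fun i => if h : i ∈ ({X} : Finset ι) then σ ⟨i, h⟩ else w i) :=
      margProb_marginalize p hKT hTK w
    have hfyK : margProb p ({y} ∪ K) w = ∑ σ : ∀ i : {j // j ∈ ({X} : Finset ι)}, α i,
        margProb p ({y} ∪ T) (fun i => if h : i ∈ ({X} : Finset ι) then σ ⟨i, h⟩ else w i) :=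
      margProb_marginalize p (Finset.union_subset_union_right hKT) hyTK w
    have key : ∀ σ : ∀ i : {j // j ∈ ({X} : Finset ι)}, α i,
        margProb p ({y} ∪ T) (fun i => if h : i ∈ ({X} : Finset ι) then σ ⟨i, h⟩ else w i)
          * margProb p M₂ w =
        margProb p ({y} ∪ M₂) w
          * margProb p T (fun i => if h : i ∈ ({X} : Finset ι) then σ ⟨i, h⟩ else w i) := by
      intro σ
      set v : ∀ i, α i := fun i => if h : i ∈ ({X} : Finset ι) then σ ⟨i, h⟩ else w i with hvdef
      have hvM₂ : ∀ i ∈ M₂, v i = w i := by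
        intro i hi
        refine dif_neg ?_
        simp only [Finset.mem_singleton]
        rintro rfl
        exact hXM₂ hi
      have hvyM₂ : ∀ i ∈ ({y} ∪ M₂ : Finset ι), v i = w i := by
        intro i hi
        rcases Finset.mem_union.mp hi with hi | hi
        · have hiy : i = y := Finset.mem_singleton.mp hi
          subst hiy
          exact dif_neg (by simpa using hyX)
        · exact hvM₂ i hi
      have e2 : margProb p M₂ v = margProb p M₂ w := margProb_congr p hvM₂
      have e3 : margProb p ({y} ∪ M₂) v = margProb p ({y} ∪ M₂) w := margProb_congr p hvyM₂
      have h := hM₂' v (by rw [e2]; exact hM₂w)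
      rw [e2, e3] at h
      exact h
    have II : margProb p ({y} ∪ K) w * margProb p M₂ w =
        margProb p ({y} ∪ M₂) w * margProb p K w := by
      rw [hfK, hfyK, Finset.sum_mul, Finset.mul_sum]
      exact Finset.sum_congr rfl fun σ _ => key σ
    have I := hM₂' w hM₂w
    apply mul_right_cancel₀ (ne_of_gt hM₂w)
    linear_combination margProb p K w * I - margProb p T w * II
  -- intersection: M₁.erase X is a Markov blanket, contradiction with minimality
  set C := M₁.erase X with hCdef
  have hCM₁ : C ⊆ M₁ := Finset.erase_subset _ _
  have hCT : C ⊆ T := hCM₁.trans hM₁.1.1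
  have hyC : y ∉ C := fun h => hyT (hCT h)
  have hCK : C ⊆ K := by
    intro i hi
    have h := Finset.mem_erase.mp hi
    exact Finset.mem_erase.mpr ⟨h.1, hM₁.1.1 h.2⟩
  refine hM₁.2 C (Finset.erase_ssubset hXM₁) ⟨hCT, ?_⟩
  intro w hCw
  rw [Finset.union_assoc, Finset.sdiff_union_of_subset hCT]
  obtain ⟨w₀, hw₀pos, hw₀C⟩ := margProb_exists_pos p hCw
  have hq : 0 < margProb p M₁ w₀ := lt_of_lt_of_le hw₀pos (le_margProb p hp0 M₁ w₀)
  set q := margProb p M₁ w₀ with hqdef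
  set r := margProb p ({y} ∪ M₁) (Function.update w₀ y (w y)) with hrdef
  have hXpos : 0 < margProb p {X} w₀ := lt_of_lt_of_le hw₀pos (le_margProb p hp0 {X} w₀)
  have claim1 : ∀ v : ∀ i, α i, (∀ i ∈ ({y} ∪ C : Finset ι), v i = w i) →
      q * margProb p ({y} ∪ K) v = r * margProb p K v := by
    intro v hv
    by_cases hKv : 0 < margProb p K v
    · set v' := Function.update v X (w₀ X) with hv'def
      have hTv' : 0 < margProb p T v' := hsupp w₀ v hXpos hKv
      have hKeq : margProb p K v' = margProb p K v :=
        margProb_congr p fun i hi => Function.update_of_ne (Finset.mem_erase.mp hi).1 _ _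
      have hyKeq : margProb p ({y} ∪ K) v' = margProb p ({y} ∪ K) v := by
        refine margProb_congr p fun i hi => ?_
        rcases Finset.mem_union.mp hi with hi | hi
        · exact Function.update_of_ne ((Finset.mem_singleton.mp hi) ▸ hyX) _ _
        · exact Function.update_of_ne (Finset.mem_erase.mp hi).1 _ _
      have hM₁v' : 0 < margProb p M₁ v' :=
        lt_of_lt_of_le hTv' (margProb_mono p hp0 hM₁.1.1 v')
      have hKv' : 0 < margProb p K v' := by rw [hKeq]; exact hKv
      have e1 := H1 v' hKv'
      have e2 := H2 v' hM₁v'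
      have hqeq : margProb p M₁ v' = q := by
        refine margProb_congr p fun i hi => ?_
        rw [hv'def]
        by_cases hiX : i = X
        · subst hiX
          exact Function.update_self _ _ _
        · have hiC : i ∈ C := Finset.mem_erase.mpr ⟨hiX, hi⟩
          rw [Function.update_of_ne hiX _ _,
            hv i (Finset.mem_union_right _ hiC), ← hw₀C i hiC]
      have hreq : margProb p ({y} ∪ M₁) v' = r := by
        refine margProb_congr p fun i hi => ?_
        rw [hv'def]
        rcases Finset.mem_union.mp hi with hi | hi
        · have hiy : i = y := Finset.mem_singleton.mp hi
          subst hiy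
          rw [Function.update_of_ne hyX _ _, Function.update_self,
            hv _ (Finset.mem_union_left _ (Finset.mem_singleton_self _))]
        · have hiy : i ≠ y := fun h => hyT (h ▸ hM₁.1.1 hi)
          rw [Function.update_of_ne hiy _ _]
          by_cases hiX : i = X
          · subst hiX
            exact Function.update_self _ _ _
          · have hiC : i ∈ C := Finset.mem_erase.mpr ⟨hiX, hi⟩
            rw [Function.update_of_ne hiX _ _,
              hv i (Finset.mem_union_right _ hiC), ← hw₀C i hiC]
      rw [hqeq] at e2
      rw [hreq] at e2
      rw [hKeq, hyKeq] at e1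
      apply mul_right_cancel₀ (ne_of_gt hTv')
      linear_combination margProb p K v * e2 - q * e1
    · have hK0 : margProb p K v = 0 :=
        le_antisymm (not_lt.mp hKv) (margProb_nonneg p hp0 K v)
      have hyK0 : margProb p ({y} ∪ K) v = 0 :=
        le_antisymm (hK0 ▸ margProb_mono p hp0 Finset.subset_union_right v)
          (margProb_nonneg p hp0 _ v)
      rw [hK0, hyK0, mul_zero, mul_zero]
  have hyKC : ({y} ∪ K) \ ({y} ∪ C) = K \ C := by
    ext i
    by_cases hiy : i = y
    · subst hiy
      simp [hyK, hyC]
    · simp [hiy]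
  have hfC : margProb p C w = ∑ σ : ∀ i : {j // j ∈ K \ C}, α i,
      margProb p K (fun i => if h : i ∈ K \ C then σ ⟨i, h⟩ else w i) :=
    margProb_marginalize p hCK rfl w
  have hfyC : margProb p ({y} ∪ C) w = ∑ σ : ∀ i : {j // j ∈ K \ C}, α i,
      margProb p ({y} ∪ K) (fun i => if h : i ∈ K \ C then σ ⟨i, h⟩ else w i) :=
    margProb_marginalize p (Finset.union_subset_union_right hCK) hyKC w
  have star : q * margProb p ({y} ∪ C) w = r * margProb p C w := by
    rw [hfC, hfyC, Finset.mul_sum, Finset.mul_sum]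
    refine Finset.sum_congr rfl fun σ _ => ?_
    refine claim1 _ fun i hi => ?_
    refine dif_neg ?_
    rcases Finset.mem_union.mp hi with hi | hi
    · have hiy : i = y := Finset.mem_singleton.mp hi
      subst hiy
      exact fun h => hyK (Finset.mem_sdiff.mp h).1
    · exact fun h => (Finset.mem_sdiff.mp h).2 hi
  have starstar : q * margProb p ({y} ∪ T) w = r * margProb p T w := by
    by_cases hTw : 0 < margProb p T w
    · have hKw : 0 < margProb p K w := lt_of_lt_of_le hTw (margProb_mono p hp0 hKT w)
      have e1 := H1 w hKw
      have c1 := claim1 w (fun i _ => rfl)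
      apply mul_right_cancel₀ (ne_of_gt hKw)
      linear_combination q * e1 + margProb p T w * c1
    · have hT0 : margProb p T w = 0 :=
        le_antisymm (not_lt.mp hTw) (margProb_nonneg p hp0 T w)
      have hyT0 : margProb p ({y} ∪ T) w = 0 :=
        le_antisymm (hT0 ▸ margProb_mono p hp0 Finset.subset_union_right w)
          (margProb_nonneg p hp0 _ w)
      rw [hT0, hyT0, mul_zero, mul_zero]
  apply mul_left_cancel₀ (ne_of_gt hq)
  linear_combination margProb p C w * starstar - margProb p T w * star

end
end

section
/- Let Y be a discrete random variable and T a finite set of discrete random variables with Y ∉ T, let Θ be the set of all Markov boundaries of Y within T, and suppose X ∈ (⋃_{M ∈ Θ} M) \ (⋂_{M ∈ Θ} M). Let L = T \ {X} and let P be the joint distribution of (X, Y, L). Then there exist two sequences of joint distributions {P_i} and {P'_i} on (X, Y, L) (on the same finite value sets), both converging to P in total variation distance, such that the part mutual information PMI[P_i](X, Y | L) and PMI[P'_i](X, Y | L) are well-defined for every i, both sequences of values converge, and lim_{i→∞} PMI[P_i](X, Y | L) ≠ lim_{i→∞} PMI[P'_i](X, Y | L). -/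
open scoped BigOperators

noncomputable section

variable {ι : Type*} [Fintype ι] [DecidableEq ι]
variable {α : ι → Type*} [∀ i, Fintype (α i)] [∀ i, DecidableEq (α i)]

/-- Conditional probability `f(y | x, l)`, read off at configuration `w`. -/
def csCond (p : (∀ i, α i) → ℝ) (y X : ι) (L : Finset ι) (w : ∀ i, α i) : ℝ :=
  margProb p (insert y (insert X L)) w / margProb p (insert X L) w

/-- Causal strength of the variable `X` on the variable `y`, with conditioning
collection `L`: `CS(X→Y) = Σ f(x,y,l) log( f(y|x,l) / Σ_{x'} f(y|x',l) f(x') )`. -/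
def CSI (p : (∀ i, α i) → ℝ) (y X : ι) (L : Finset ι) : ℝ :=
  ∑ w : ∀ i, α i, p w *
    Real.log (csCond p y X L w /
      ∑ v : α X, csCond p y X L (Function.update w X v) *
        margProb p {X} (Function.update w X v))

/-- Every conditional probability appearing with nonzero weight in `CSI` is defined. -/
def CSIDefined (p : (∀ i, α i) → ℝ) (X : ι) (L : Finset ι) : Prop :=
  ∀ w : ∀ i, α i, 0 < margProb p {X} w → 0 < margProb p L w →
    0 < margProb p (insert X L) w

/-- `f*(x | l) = Σ_y f(x | y, l) f(y)`, read off at configuration `w`. -/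
def pmiFstarX (p : (∀ i, α i) → ℝ) (y X : ι) (L : Finset ι) (w : ∀ i, α i) : ℝ :=
  ∑ u : α y, (margProb p (insert y (insert X L)) (Function.update w y u) /
      margProb p (insert y L) (Function.update w y u)) *
    margProb p {y} (Function.update w y u)

/-- `f*(y | l) = Σ_x f(y | x, l) f(x)`, read off at configuration `w`. -/
def pmiFstarY (p : (∀ i, α i) → ℝ) (y X : ι) (L : Finset ι) (w : ∀ i, α i) : ℝ :=
  ∑ v : α X, (margProb p (insert y (insert X L)) (Function.update w X v) /
      margProb p (insert X L) (Function.update w X v)) *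
    margProb p {X} (Function.update w X v)

/-- Part mutual information between `X` and `y` given the collection `L`:
`PMI(X,Y|L) = Σ f(x,y,l) log( f(x,y|l) / ( f*(x|l) f*(y|l) ) )`. -/
def PMII (p : (∀ i, α i) → ℝ) (y X : ι) (L : Finset ι) : ℝ :=
  ∑ w : ∀ i, α i, p w *
    Real.log ((margProb p (insert y (insert X L)) w / margProb p L w) /
      (pmiFstarX p y X L w * pmiFstarY p y X L w))

/-- Every conditional probability appearing with nonzero weight in `PMII` is defined. -/
def PMIIDefined (p : (∀ i, α i) → ℝ) (y X : ι) (L : Finset ι) : Prop :=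
  ∀ w : ∀ i, α i, 0 < margProb p L w →
    (0 < margProb p {X} w → 0 < margProb p (insert X L) w) ∧
    (0 < margProb p {y} w → 0 < margProb p (insert y L) w)


namespace PMIAux

variable {ι : Type*} [Fintype ι] [DecidableEq ι]
variable {α : ι → Type*} [∀ i, Fintype (α i)] [∀ i, DecidableEq (α i)]

lemma margProb_nonneg {p : (∀ i, α i) → ℝ} (hp : ∀ w, 0 ≤ p w) (S : Finset ι)
    (x : ∀ i, α i) : 0 ≤ margProb p S x := by
  refine Finset.sum_nonneg fun w _ => ?_
  split_ifs <;> simp [hp w]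

lemma margProb_mono {p : (∀ i, α i) → ℝ} (hp : ∀ w, 0 ≤ p w) {S S' : Finset ι}
    (h : S ⊆ S') (x : ∀ i, α i) : margProb p S' x ≤ margProb p S x := by
  refine Finset.sum_le_sum fun w _ => ?_
  by_cases hc : ∀ i ∈ S', w i = x i
  · rw [if_pos hc, if_pos fun i hi => hc i (h hi)]
  · rw [if_neg hc]
    split_ifs <;> simp [hp w]

lemma margProb_le_one {p : (∀ i, α i) → ℝ} (hp : IsDist p) (S : Finset ι)
    (x : ∀ i, α i) : margProb p S x ≤ 1 := by
  rw [← hp.2]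
  refine Finset.sum_le_sum fun w _ => ?_
  split_ifs <;> simp [hp.1 w]

lemma self_le_margProb {p : (∀ i, α i) → ℝ} (hp : ∀ w, 0 ≤ p w) (S : Finset ι)
    (x : ∀ i, α i) : p x ≤ margProb p S x := by
  have : p x = if ∀ i ∈ S, x i = x i then p x else 0 := by simp
  rw [this]
  refine Finset.single_le_sum (f := fun w => if ∀ i ∈ S, w i = x i then p w else 0)
    (fun w _ => ?_) (Finset.mem_univ x)
  split_ifs <;> simp [hp w]

lemma margProb_pos {p : (∀ i, α i) → ℝ} (hp : ∀ w, 0 ≤ p w) {x : ∀ i, α i}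
    (hx : 0 < p x) (S : Finset ι) : 0 < margProb p S x :=
  lt_of_lt_of_le hx (self_le_margProb hp S x)

lemma margProb_congr {p : (∀ i, α i) → ℝ} {S : Finset ι} {x x' : ∀ i, α i}
    (h : ∀ i ∈ S, x i = x' i) : margProb p S x = margProb p S x' := by
  refine Finset.sum_congr rfl fun w _ => ?_
  have : (∀ i ∈ S, w i = x i) ↔ (∀ i ∈ S, w i = x' i) :=
    ⟨fun hc i hi => (hc i hi).trans (h i hi), fun hc i hi => (hc i hi).trans (h i hi).symm⟩
  simp only [this]

lemma margProb_update_not_mem {p : (∀ i, α i) → ℝ} {S : Finset ι} {j : ι} (hj : j ∉ S)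
    (x : ∀ i, α i) (v : α j) : margProb p S (Function.update x j v) = margProb p S x :=
  margProb_congr fun i hi => Function.update_of_ne (by rintro rfl; exact hj hi) v x

lemma margProb_sum_update {p : (∀ i, α i) → ℝ} {S : Finset ι} {j : ι} (hj : j ∉ S)
    (x : ∀ i, α i) :
    ∑ v : α j, margProb p (insert j S) (Function.update x j v) = margProb p S x := by
  unfold margProb
  rw [Finset.sum_comm]
  refine Finset.sum_congr rfl fun w _ => ?_
  have key : ∀ v : α j, (∀ i ∈ insert j S, w i = Function.update x j v i) ↔
      (w j = v ∧ ∀ i ∈ S, w i = x i) := by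
    intro v
    constructor
    · intro h
      refine ⟨by simpa using h j (Finset.mem_insert_self j S), fun i hi => ?_⟩
      have := h i (Finset.mem_insert_of_mem hi)
      rwa [Function.update_of_ne (fun he : i = j => hj (he ▸ hi))] at this
    · rintro ⟨h1, h2⟩ i hi
      rcases Finset.mem_insert.1 hi with rfl | hi'
      · simpa using h1
      · rw [Function.update_of_ne (fun he : i = j => hj (he ▸ hi'))]; exact h2 i hi'
  simp only [key]
  by_cases hc : ∀ i ∈ S, w i = x i
  · have h2 : ∀ v : α j, (w j = v ∧ ∀ i ∈ S, w i = x i) ↔ (w j = v) :=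
      fun v => and_iff_left hc
    simp only [h2, if_pos hc]
    simp
  · have h2 : ∀ v : α j, (w j = v ∧ ∀ i ∈ S, w i = x i) ↔ False :=
      fun v => iff_false_intro (fun h => hc h.2)
    simp only [h2, if_neg hc]
    simp


lemma margProb_empty {p : (∀ i, α i) → ℝ} (hp : IsDist p) (x : ∀ i, α i) :
    margProb p ∅ x = 1 := by
  unfold margProb
  simp [hp.2]

lemma exists_pos_of_margProb_pos {p : (∀ i, α i) → ℝ} (hp : ∀ w, 0 ≤ p w) {S : Finset ι}
    {x : ∀ i, α i} (h : 0 < margProb p S x) :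
    ∃ w, (∀ i ∈ S, w i = x i) ∧ 0 < p w := by
  obtain ⟨w, _, hw⟩ := Finset.exists_ne_zero_of_sum_ne_zero (by positivity :
    (∑ w : ∀ i, α i, if ∀ i ∈ S, w i = x i then p w else 0) ≠ 0)
  by_cases hc : ∀ i ∈ S, w i = x i
  · exact ⟨w, hc, lt_of_le_of_ne (hp w) (by rw [if_pos hc] at hw; exact fun e => hw e.symm)⟩
  · rw [if_neg hc] at hw; exact absurd rfl hw

lemma margProb_linear {p q : (∀ i, α i) → ℝ} (a b : ℝ) (S : Finset ι) (x : ∀ i, α i) :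
    margProb (fun w => a * p w + b * q w) S x = a * margProb p S x + b * margProb q S x := by
  unfold margProb
  rw [Finset.mul_sum, Finset.mul_sum, ← Finset.sum_add_distrib]
  refine Finset.sum_congr rfl fun w _ => ?_
  split_ifs <;> simp

lemma margProb_prod (g : ∀ i, α i → ℝ) (hg : ∀ i, ∑ v, g i v = 1) (S : Finset ι)
    (x : ∀ i, α i) :
    margProb (fun w => ∏ i, g i (w i)) S x = ∏ i ∈ S, g i (x i) := by
  unfold margProb
  have key : ∀ w : ∀ i, α i, (if ∀ i ∈ S, w i = x i then ∏ i, g i (w i) else 0) =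
      ∏ i, (fun i v => if i ∈ S then (if v = x i then g i v else 0) else g i v) i (w i) := by
    intro w
    by_cases hc : ∀ i ∈ S, w i = x i
    · rw [if_pos hc]
      refine Finset.prod_congr rfl fun i _ => ?_
      by_cases hi : i ∈ S
      · simp [hi, hc i hi]
      · simp [hi]
    · rw [if_neg hc]
      push_neg at hc
      obtain ⟨i, hi, hne⟩ := hc
      refine (Finset.prod_eq_zero (Finset.mem_univ i) ?_).symm
      simp [hi, hne]
  refine Eq.trans (Finset.sum_congr rfl fun w _ => key w) ?_
  refine Eq.trans (Fintype.prod_sum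
    (fun i v => if i ∈ S then (if v = x i then g i v else 0) else g i v)).symm ?_
  have step : ∀ i, (∑ v, (fun i v => if i ∈ S then (if v = x i then g i v else 0) else g i v) i v)
      = if i ∈ S then g i (x i) else 1 := by
    intro i
    by_cases hi : i ∈ S
    · simp [hi]
    · simp [hi, hg i]
  refine Eq.trans (Finset.prod_congr rfl fun i _ => step i) ?_
  simp [Finset.prod_ite_mem]

lemma blanket_eq {p : (∀ i, α i) → ℝ} {y : ι} {T M : Finset ι}
    (hM : MarkovBlanket p y T M) :
    ∀ w, 0 < margProb p M w →
      margProb p (insert y T) w * margProb p M w =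
        margProb p (insert y M) w * margProb p T w := by
  intro w hw
  have := hM.2 w hw
  rwa [Finset.union_assoc, Finset.sdiff_union_of_subset hM.1, ← Finset.insert_eq, ← Finset.insert_eq] at this

lemma star_lemma {p : (∀ i, α i) → ℝ} (hp : IsDist p) {y X : ι} {T M' : Finset ι}
    (hXT : X ∈ T) (hXy : X ≠ y)
    (hM' : MarkovBlanket p y T M') (hXM' : X ∉ M') :
    ∀ w, 0 < margProb p (T.erase X) w →
      margProb p (insert y T) w * margProb p (T.erase X) w =
        margProb p (insert y (T.erase X)) w * margProb p T w := by
  intro w hLw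
  set L := T.erase X with hL
  have hM'L : M' ⊆ L := fun i hi =>
    Finset.mem_erase.2 ⟨fun he => hXM' (he ▸ hi), hM'.1 hi⟩
  have hXL : X ∉ L := Finset.notMem_erase X T
  have hXyL : X ∉ insert y L := by
    simp only [Finset.mem_insert]
    rintro (h | h)
    · exact hXy h
    · exact hXL h
  have hXyM' : X ∉ insert y M' := by
    simp only [Finset.mem_insert]
    rintro (h | h)
    · exact hXy h
    · exact hXM' h
  have hM'w : 0 < margProb p M' w :=
    lt_of_lt_of_le hLw (margProb_mono hp.1 hM'L w)
  have claim : ∀ v : α X,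
      margProb p (insert y T) (Function.update w X v) * margProb p M' w =
        margProb p (insert y M') w * margProb p T (Function.update w X v) := by
    intro v
    by_cases hT : 0 < margProb p T (Function.update w X v)
    · have hM'v : 0 < margProb p M' (Function.update w X v) := by
        rwa [margProb_update_not_mem hXM']
      have h2 := blanket_eq hM' (Function.update w X v) hM'v
      rwa [margProb_update_not_mem hXM', margProb_update_not_mem hXyM'] at h2
    · have hT0 : margProb p T (Function.update w X v) = 0 :=
        le_antisymm (not_lt.1 hT) (margProb_nonneg hp.1 _ _)
      have hyT0 : margProb p (insert y T) (Function.update w X v) = 0 :=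
        le_antisymm (hT0 ▸ margProb_mono hp.1 (Finset.subset_insert y T) _)
          (margProb_nonneg hp.1 _ _)
      rw [hT0, hyT0, zero_mul, mul_zero]
  -- sum the claim over v
  have sum1 : ∑ v : α X, margProb p (insert y T) (Function.update w X v) =
      margProb p (insert y L) w := by
    have hset : insert X (insert y L) = insert y T := by
      rw [Finset.insert_comm, Finset.insert_erase hXT]
    rw [← hset]
    exact margProb_sum_update hXyL w
  have sum2 : ∑ v : α X, margProb p T (Function.update w X v) = margProb p L w := by
    have hset : insert X L = T := Finset.insert_erase hXT
    rw [← hset]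
    exact margProb_sum_update hXL w
  have starstar : margProb p (insert y L) w * margProb p M' w =
      margProb p (insert y M') w * margProb p L w := by
    rw [← sum1, ← sum2, Finset.sum_mul, Finset.mul_sum]
    exact Finset.sum_congr rfl fun v _ => claim v
  have claimw := claim (w X)
  rw [Function.update_eq_self] at claimw
  have key : (margProb p (insert y T) w * margProb p L w) * margProb p M' w =
      (margProb p (insert y L) w * margProb p T w) * margProb p M' w := by
    linear_combination margProb p L w * claimw - margProb p T w * starstar
  exact mul_right_cancel₀ (ne_of_gt hM'w) key

lemma defect_lemma {p : (∀ i, α i) → ℝ} (hp : IsDist p) {y X : ι} {T M : Finset ι}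
    (hXT : X ∈ T) (hXy : X ≠ y) (hyT : y ∉ T)
    (hM : MarkovBoundary p y T M) (hXM : X ∈ M)
    (hstar : ∀ w, 0 < margProb p (T.erase X) w →
      margProb p (insert y T) w * margProb p (T.erase X) w =
        margProb p (insert y (T.erase X)) w * margProb p T w) :
    ∃ w v, 0 < p w ∧ 0 < margProb p {X} (Function.update w X v) ∧
      margProb p T (Function.update w X v) = 0 := by
  set L := T.erase X with hLdef
  have hXL : X ∉ L := Finset.notMem_erase X T
  by_contra hcon
  push_neg at hcon
  -- no-defect, upgraded form
  have nodef : ∀ w (v : α X), 0 < margProb p L w →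
      0 < margProb p {X} (Function.update w X v) →
      0 < margProb p T (Function.update w X v) := by
    intro w v hLw hXw
    obtain ⟨w', hw'L, hw'p⟩ := exists_pos_of_margProb_pos hp.1 hLw
    have hXeq : margProb p {X} (Function.update w' X v) =
        margProb p {X} (Function.update w X v) :=
      margProb_congr (by intro i hi; rw [Finset.mem_singleton] at hi; subst hi; simp)
    have hTeq : margProb p T (Function.update w' X v) =
        margProb p T (Function.update w X v) := by
      refine margProb_congr fun i hi => ?_
      by_cases hiX : i = X
      · subst hiX; simp
      · rw [Function.update_of_ne hiX, Function.update_of_ne hiX]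
        exact hw'L i (Finset.mem_erase.2 ⟨hiX, hi⟩)
    have := hcon w' v hw'p (hXeq ▸ hXw)
    have hnn := margProb_nonneg hp.1 T (Function.update w' X v)
    rw [hTeq] at this hnn
    exact lt_of_le_of_ne hnn (Ne.symm this)
  -- show M.erase X is a Markov blanket, contradicting minimality
  set M₀ := M.erase X with hM0def
  have hM0M : M₀ ⊂ M := Finset.erase_ssubset hXM
  have hMT : M ⊆ T := hM.1.1
  have hM0T : M₀ ⊆ T := fun i hi => hMT (Finset.mem_of_mem_erase hi)
  have hXM0 : X ∉ M₀ := Finset.notMem_erase X M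
  have hXyM0 : X ∉ insert y M₀ := by
    simp only [Finset.mem_insert]
    rintro (h | h)
    · exact hXy h
    · exact hXM0 h
  have hXyM : X ∉ insert y M → False := fun h => h (Finset.mem_insert_of_mem hXM)
  refine hM.2 M₀ hM0M ⟨hM0T, ?_⟩
  intro w hM0w
  rw [Finset.union_assoc, Finset.sdiff_union_of_subset hM0T, ← Finset.insert_eq, ← Finset.insert_eq]
  -- goal: margProb p (insert y T) w * margProb p M₀ w
  --     = margProb p (insert y M₀) w * margProb p T w
  by_cases hT : 0 < margProb p T w
  case neg =>
    have hT0 : margProb p T w = 0 :=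
      le_antisymm (not_lt.1 hT) (margProb_nonneg hp.1 _ _)
    have hyT0 : margProb p (insert y T) w = 0 :=
      le_antisymm (hT0 ▸ margProb_mono hp.1 (Finset.subset_insert y T) _)
        (margProb_nonneg hp.1 _ _)
    rw [hT0, hyT0, zero_mul, mul_zero]
  case pos =>
  have hLw : 0 < margProb p L w :=
    lt_of_lt_of_le hT (margProb_mono hp.1 (Finset.erase_subset X T) w)
  have hXsubM : ({X} : Finset ι) ⊆ M := Finset.singleton_subset_iff.2 hXM
  have claim2 : ∀ v : α X,
      margProb p (insert y M) (Function.update w X v) * margProb p L w =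
        margProb p (insert y L) w * margProb p M (Function.update w X v) := by
    intro v
    by_cases hMv : 0 < margProb p M (Function.update w X v)
    · have hXv : 0 < margProb p {X} (Function.update w X v) :=
        lt_of_lt_of_le hMv (margProb_mono hp.1 hXsubM _)
      have hTv : 0 < margProb p T (Function.update w X v) := nodef w v hLw hXv
      have h2v := blanket_eq hM.1 (Function.update w X v) hMv
      have hLv : 0 < margProb p L (Function.update w X v) := by
        rwa [margProb_update_not_mem hXL]
      have h1v := hstar (Function.update w X v) hLv
      rw [margProb_update_not_mem hXL] at h1v
      have hXyL : X ∉ insert y L := by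
        simp only [Finset.mem_insert]
        rintro (h | h)
        · exact hXy h
        · exact hXL h
      rw [margProb_update_not_mem hXyL] at h1v
      have key : (margProb p (insert y M) (Function.update w X v) * margProb p L w) *
          margProb p T (Function.update w X v) =
          (margProb p (insert y L) w * margProb p M (Function.update w X v)) *
          margProb p T (Function.update w X v) := by
        linear_combination (-(margProb p L w)) * h2v +
          margProb p M (Function.update w X v) * h1v
      exact mul_right_cancel₀ (ne_of_gt hTv) key
    · have hM0v : margProb p M (Function.update w X v) = 0 :=
        le_antisymm (not_lt.1 hMv) (margProb_nonneg hp.1 _ _)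
      have hyM0v : margProb p (insert y M) (Function.update w X v) = 0 :=
        le_antisymm (hM0v ▸ margProb_mono hp.1 (Finset.subset_insert y M) _)
          (margProb_nonneg hp.1 _ _)
      rw [hM0v, hyM0v, zero_mul, mul_zero]
  have sum1 : ∑ v : α X, margProb p (insert y M) (Function.update w X v) =
      margProb p (insert y M₀) w := by
    have hset : insert X (insert y M₀) = insert y M := by
      rw [Finset.insert_comm, Finset.insert_erase hXM]
    rw [← hset]
    exact margProb_sum_update hXyM0 w
  have sum2 : ∑ v : α X, margProb p M (Function.update w X v) = margProb p M₀ w := by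
    have hset : insert X M₀ = M := Finset.insert_erase hXM
    rw [← hset]
    exact margProb_sum_update hXM0 w
  have h3 : margProb p (insert y M₀) w * margProb p L w =
      margProb p (insert y L) w * margProb p M₀ w := by
    rw [← sum1, ← sum2, Finset.sum_mul, Finset.mul_sum]
    exact Finset.sum_congr rfl fun v _ => claim2 v
  have hstarw := hstar w hLw
  have key : (margProb p (insert y T) w * margProb p M₀ w) * margProb p L w =
      (margProb p (insert y M₀) w * margProb p T w) * margProb p L w := by
    linear_combination margProb p M₀ w * hstarw - margProb p T w * h3
  exact mul_right_cancel₀ (ne_of_gt hLw) key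

lemma margProb_insert_of_subsingleton {p : (∀ i, α i) → ℝ} {y : ι}
    (hsub : Subsingleton (α y)) (S : Finset ι) (w : ∀ i, α i) :
    margProb p (insert y S) w = margProb p S w := by
  unfold margProb
  refine Finset.sum_congr rfl fun w' _ => ?_
  have : (∀ i ∈ insert y S, w' i = w i) ↔ (∀ i ∈ S, w' i = w i) := by
    constructor
    · exact fun h i hi => h i (Finset.mem_insert_of_mem hi)
    · intro h i hi
      rcases Finset.mem_insert.1 hi with rfl | hi'
      · exact Subsingleton.elim _ _
      · exact h i hi'
  simp only [this]

lemma nontrivial_of_boundary_mem {p : (∀ i, α i) → ℝ} {y X : ι} {T M : Finset ι}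
    (hM : MarkovBoundary p y T M) (hXM : X ∈ M) : Nontrivial (α y) := by
  rw [← not_subsingleton_iff_nontrivial]
  intro hsub
  have hblank : MarkovBlanket p y T ∅ := by
    refine ⟨Finset.empty_subset T, fun w _ => ?_⟩
    rw [Finset.union_empty, Finset.union_empty, Finset.sdiff_empty, ← Finset.insert_eq]
    have h1 : margProb p (insert y T) w = margProb p T w :=
      margProb_insert_of_subsingleton hsub T w
    have h2 : margProb p {y} w = margProb p (∅ : Finset ι) w := by
      have : ({y} : Finset ι) = insert y ∅ := rfl
      rw [this, margProb_insert_of_subsingleton hsub]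
    rw [h1, h2, Finset.union_empty]
    ring
  have hne : (∅ : Finset ι) ⊂ M := Finset.empty_ssubset.2 ⟨X, hXM⟩
  exact hM.2 ∅ hne hblank
open Filter in
lemma tendsto_e : Filter.Tendsto (fun n : ℕ => ((n : ℝ) + 1)⁻¹) Filter.atTop (nhds 0) :=
  tendsto_one_div_add_atTop_nhds_zero_nat.congr (by intro n; rw [one_div])

lemma e_pos (n : ℕ) : 0 < ((n : ℝ) + 1)⁻¹ := by positivity

lemma e_le_one (n : ℕ) : ((n : ℝ) + 1)⁻¹ ≤ 1 := by
  rw [inv_le_one_iff₀]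
  right
  have : (0:ℝ) ≤ (n:ℝ) := Nat.cast_nonneg n
  linarith

/-- The mixture sequence `(1-εₙ) p + εₙ q` with `εₙ = 1/(n+1)`. -/
def mix (p q : (∀ i, α i) → ℝ) (n : ℕ) : (∀ i, α i) → ℝ :=
  fun w => (1 - ((n : ℝ) + 1)⁻¹) * p w + ((n : ℝ) + 1)⁻¹ * q w

lemma mix_isDist {p q : (∀ i, α i) → ℝ} (hp : IsDist p) (hq : IsDist q) (n : ℕ) :
    IsDist (mix p q n) := by
  constructor
  · intro w
    have h1 : (0:ℝ) ≤ 1 - ((n : ℝ) + 1)⁻¹ := by linarith [e_le_one n]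
    exact add_nonneg (mul_nonneg h1 (hp.1 w)) (mul_nonneg (le_of_lt (e_pos n)) (hq.1 w))
  · unfold mix
    rw [Finset.sum_add_distrib, ← Finset.mul_sum, ← Finset.mul_sum, hp.2, hq.2]
    ring

lemma mix_pos {p q : (∀ i, α i) → ℝ} (hp : ∀ w, 0 ≤ p w) (hq : ∀ w, 0 < q w) (n : ℕ)
    (w : ∀ i, α i) : 0 < mix p q n w := by
  have h1 : (0:ℝ) ≤ 1 - ((n : ℝ) + 1)⁻¹ := by linarith [e_le_one n]
  have h2 := e_pos n
  unfold mix
  have := hp w; have := hq w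
  have : 0 < ((n : ℝ) + 1)⁻¹ * q w := mul_pos h2 (hq w)
  nlinarith [mul_nonneg h1 (hp w)]

lemma margProb_mix (p q : (∀ i, α i) → ℝ) (n : ℕ) (S : Finset ι) (x : ∀ i, α i) :
    margProb (mix p q n) S x =
      (1 - ((n : ℝ) + 1)⁻¹) * margProb p S x + ((n : ℝ) + 1)⁻¹ * margProb q S x :=
  margProb_linear _ _ S x

lemma tendsto_margProb_mix (p q : (∀ i, α i) → ℝ) (S : Finset ι) (x : ∀ i, α i) :
    Filter.Tendsto (fun n => margProb (mix p q n) S x) Filter.atTop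
      (nhds (margProb p S x)) := by
  simp only [margProb_mix]
  have h : Filter.Tendsto
      (fun n : ℕ => (1 - ((n : ℝ) + 1)⁻¹) * margProb p S x +
        ((n : ℝ) + 1)⁻¹ * margProb q S x) Filter.atTop
      (nhds ((1 - 0) * margProb p S x + 0 * margProb q S x)) :=
    (((tendsto_const_nhds.sub tendsto_e).mul tendsto_const_nhds).add
      (tendsto_e.mul tendsto_const_nhds))
  simpa using h

lemma tendsto_mix_apply (p q : (∀ i, α i) → ℝ) (w : ∀ i, α i) :
    Filter.Tendsto (fun n => mix p q n w) Filter.atTop (nhds (p w)) := by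
  have h : Filter.Tendsto
      (fun n : ℕ => (1 - ((n : ℝ) + 1)⁻¹) * p w + ((n : ℝ) + 1)⁻¹ * q w) Filter.atTop
      (nhds ((1 - 0) * p w + 0 * q w)) :=
    (((tendsto_const_nhds.sub tendsto_e).mul tendsto_const_nhds).add
      (tendsto_e.mul tendsto_const_nhds))
  simpa [mix] using h

/-- Limit of the conditional probability `margProb S' / margProb S` along the mixture:
the `p`-conditional where defined, the `q`-conditional elsewhere. -/
def Rlim (p q : (∀ i, α i) → ℝ) (S' S : Finset ι) (x : ∀ i, α i) : ℝ :=
  if 0 < margProb p S x then margProb p S' x / margProb p S x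
  else margProb q S' x / margProb q S x

lemma Rlim_nonneg {p q : (∀ i, α i) → ℝ} (hp : ∀ w, 0 ≤ p w) (hq : ∀ w, 0 ≤ q w)
    (S' S : Finset ι) (x : ∀ i, α i) : 0 ≤ Rlim p q S' S x := by
  unfold Rlim
  split_ifs
  · exact div_nonneg (margProb_nonneg hp _ _) (margProb_nonneg hp _ _)
  · exact div_nonneg (margProb_nonneg hq _ _) (margProb_nonneg hq _ _)

lemma tendsto_ratio_mix {p q : (∀ i, α i) → ℝ} (hp : ∀ w, 0 ≤ p w) (hq : ∀ w, 0 < q w)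
    {S S' : Finset ι} (hSS' : S ⊆ S') (x : ∀ i, α i) :
    Filter.Tendsto
      (fun n => margProb (mix p q n) S' x / margProb (mix p q n) S x) Filter.atTop
      (nhds (Rlim p q S' S x)) := by
  unfold Rlim
  by_cases h : 0 < margProb p S x
  · rw [if_pos h]
    exact (tendsto_margProb_mix p q S' x).div (tendsto_margProb_mix p q S x) (ne_of_gt h)
  · rw [if_neg h]
    have hS0 : margProb p S x = 0 := le_antisymm (not_lt.1 h) (margProb_nonneg hp _ _)
    have hS'0 : margProb p S' x = 0 :=
      le_antisymm (hS0 ▸ margProb_mono hp hSS' x) (margProb_nonneg hp _ _)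
    have heq : ∀ n, margProb (mix p q n) S' x / margProb (mix p q n) S x =
        margProb q S' x / margProb q S x := by
      intro n
      rw [margProb_mix, margProb_mix, hS0, hS'0, mul_zero, zero_add, zero_add]
      exact mul_div_mul_left _ _ (ne_of_gt (e_pos n))
    exact Filter.Tendsto.congr (fun n => (heq n).symm) tendsto_const_nhds

/-- Limit of `pmiFstarX` along the mixture. -/
def Alim (p q : (∀ i, α i) → ℝ) (y X : ι) (L : Finset ι) (w : ∀ i, α i) : ℝ :=
  ∑ u : α y, Rlim p q (insert y (insert X L)) (insert y L) (Function.update w y u) *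
    margProb p {y} (Function.update w y u)

/-- Limit of `pmiFstarY` along the mixture. -/
def Blim (p q : (∀ i, α i) → ℝ) (y X : ι) (L : Finset ι) (w : ∀ i, α i) : ℝ :=
  ∑ v : α X, Rlim p q (insert y (insert X L)) (insert X L) (Function.update w X v) *
    margProb p {X} (Function.update w X v)

/-- Limit of the `PMII` summand along the mixture. -/
def climit (p q : (∀ i, α i) → ℝ) (y X : ι) (L : Finset ι) (w : ∀ i, α i) : ℝ :=
  p w * Real.log (Rlim p q (insert y (insert X L)) L w /
    (Alim p q y X L w * Blim p q y X L w))

lemma abs_log_le {a x b : ℝ} (ha : 0 < a) (hax : a ≤ x) (hxb : x ≤ b) :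
    |Real.log x| ≤ |Real.log a| + |Real.log b| := by
  have hx : 0 < x := lt_of_lt_of_le ha hax
  rcases le_or_gt 0 (Real.log x) with h | h
  · rw [abs_of_nonneg h]
    have : Real.log x ≤ Real.log b := Real.log_le_log hx hxb
    have hb : Real.log x ≤ |Real.log b| := this.trans (le_abs_self _)
    linarith [abs_nonneg (Real.log a)]
  · rw [abs_of_neg h]
    have : Real.log a ≤ Real.log x := Real.log_le_log ha hax
    have hb : -Real.log x ≤ -Real.log a := by linarith
    have : -Real.log a ≤ |Real.log a| := neg_le_abs _
    linarith [abs_nonneg (Real.log b)]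
lemma tendsto_PMII_mix {p q : (∀ i, α i) → ℝ} [∀ i, Nonempty (α i)]
    (hp : IsDist p) (hq : IsDist q) (hqpos : ∀ w, 0 < q w) (y X : ι) (L : Finset ι) :
    Filter.Tendsto (fun n => PMII (mix p q n) y X L) Filter.atTop
      (nhds (∑ w, climit p q y X L w)) := by
  have hqnn : ∀ w, 0 ≤ q w := fun w => le_of_lt (hqpos w)
  have hshape : (fun n => PMII (mix p q n) y X L) = fun n => ∑ w, (mix p q n w) *
      Real.log ((margProb (mix p q n) (insert y (insert X L)) w /
          margProb (mix p q n) L w) /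
        (pmiFstarX (mix p q n) y X L w * pmiFstarY (mix p q n) y X L w)) := rfl
  rw [hshape]
  refine tendsto_finset_sum _ fun w _ => ?_
  have hsubL : L ⊆ insert y (insert X L) :=
    (Finset.subset_insert X L).trans (Finset.subset_insert y _)
  have hsubYL : insert y L ⊆ insert y (insert X L) :=
    Finset.insert_subset_insert y (Finset.subset_insert X L)
  have hsubXL : insert X L ⊆ insert y (insert X L) := Finset.subset_insert y _
  have hfX : ∀ n, pmiFstarX (mix p q n) y X L w =
      ∑ u : α y, (margProb (mix p q n) (insert y (insert X L)) (Function.update w y u) /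
        margProb (mix p q n) (insert y L) (Function.update w y u)) *
        margProb (mix p q n) {y} (Function.update w y u) := fun n => rfl
  have hfY : ∀ n, pmiFstarY (mix p q n) y X L w =
      ∑ v : α X, (margProb (mix p q n) (insert y (insert X L)) (Function.update w X v) /
        margProb (mix p q n) (insert X L) (Function.update w X v)) *
        margProb (mix p q n) {X} (Function.update w X v) := fun n => rfl
  have hA : Filter.Tendsto (fun n => pmiFstarX (mix p q n) y X L w) Filter.atTop
      (nhds (Alim p q y X L w)) := by
    simp only [hfX]
    exact tendsto_finset_sum _ fun u _ =>
      (tendsto_ratio_mix hp.1 hqpos hsubYL _).mul (tendsto_margProb_mix p q {y} _)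
  have hB : Filter.Tendsto (fun n => pmiFstarY (mix p q n) y X L w) Filter.atTop
      (nhds (Blim p q y X L w)) := by
    simp only [hfY]
    exact tendsto_finset_sum _ fun v _ =>
      (tendsto_ratio_mix hp.1 hqpos hsubXL _).mul (tendsto_margProb_mix p q {X} _)
  have hN : Filter.Tendsto (fun n => margProb (mix p q n) (insert y (insert X L)) w /
      margProb (mix p q n) L w) Filter.atTop
      (nhds (Rlim p q (insert y (insert X L)) L w)) :=
    tendsto_ratio_mix hp.1 hqpos hsubL w
  by_cases hpw : 0 < p w
  · -- positive-probability configuration: continuity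
    have hL : 0 < margProb p L w := margProb_pos hp.1 hpw L
    have hYL : 0 < margProb p (insert y L) w := margProb_pos hp.1 hpw _
    have hXL : 0 < margProb p (insert X L) w := margProb_pos hp.1 hpw _
    have hYXL : 0 < margProb p (insert y (insert X L)) w := margProb_pos hp.1 hpw _
    have hNpos : 0 < Rlim p q (insert y (insert X L)) L w := by
      unfold Rlim; rw [if_pos hL]; exact div_pos hYXL hL
    have hApos : 0 < Alim p q y X L w := by
      have hterm : 0 < Rlim p q (insert y (insert X L)) (insert y L)
          (Function.update w y (w y)) *
          margProb p {y} (Function.update w y (w y)) := by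
        rw [Function.update_eq_self]
        have : 0 < Rlim p q (insert y (insert X L)) (insert y L) w := by
          unfold Rlim; rw [if_pos hYL]; exact div_pos hYXL hYL
        exact mul_pos this (margProb_pos hp.1 hpw _)
      refine lt_of_lt_of_le hterm ?_
      exact Finset.single_le_sum (f := fun u => Rlim p q (insert y (insert X L))
          (insert y L) (Function.update w y u) * margProb p {y} (Function.update w y u))
        (fun u _ => mul_nonneg (Rlim_nonneg hp.1 hqnn _ _ _) (margProb_nonneg hp.1 _ _))
        (Finset.mem_univ (w y))
    have hBpos : 0 < Blim p q y X L w := by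
      have hterm : 0 < Rlim p q (insert y (insert X L)) (insert X L)
          (Function.update w X (w X)) *
          margProb p {X} (Function.update w X (w X)) := by
        rw [Function.update_eq_self]
        have : 0 < Rlim p q (insert y (insert X L)) (insert X L) w := by
          unfold Rlim; rw [if_pos hXL]; exact div_pos hYXL hXL
        exact mul_pos this (margProb_pos hp.1 hpw _)
      refine lt_of_lt_of_le hterm ?_
      exact Finset.single_le_sum (f := fun v => Rlim p q (insert y (insert X L))
          (insert X L) (Function.update w X v) * margProb p {X} (Function.update w X v))
        (fun v _ => mul_nonneg (Rlim_nonneg hp.1 hqnn _ _ _) (margProb_nonneg hp.1 _ _))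
        (Finset.mem_univ (w X))
    have hABpos : 0 < Alim p q y X L w * Blim p q y X L w := mul_pos hApos hBpos
    have hlog := ((hN.div (hA.mul hB) (ne_of_gt hABpos)).log
      (ne_of_gt (div_pos hNpos hABpos)))
    exact (tendsto_mix_apply p q w).mul hlog
  · -- zero-probability configuration: squeeze
    have hp0 : p w = 0 := le_antisymm (not_lt.1 hpw) (hp.1 w)
    have hclim : climit p q y X L w = 0 := by unfold climit; rw [hp0, zero_mul]
    rw [hclim]
    -- minimum of q
    obtain ⟨wm, _, hwm⟩ := Finset.exists_min_image Finset.univ q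
      ⟨Classical.arbitrary _, Finset.mem_univ _⟩
    set δ := q wm with hδdef
    have hδpos : 0 < δ := hqpos wm
    have hδle : ∀ x, δ ≤ q x := fun x => hwm x (Finset.mem_univ x)
    have hδ1 : δ ≤ 1 := by
      have h1 := self_le_margProb hq.1 ∅ wm
      rw [margProb_empty hq] at h1
      exact h1
    have hmixD : ∀ n, IsDist (mix p q n) := fun n => mix_isDist hp hq n
    -- uniform bounds on marginals of the mixture
    have hlb : ∀ (n : ℕ) (S : Finset ι) (x : ∀ i, α i),
        ((n : ℝ) + 1)⁻¹ * δ ≤ margProb (mix p q n) S x := by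
      intro n S x
      rw [margProb_mix]
      have h1 : (0:ℝ) ≤ (1 - ((n : ℝ) + 1)⁻¹) * margProb p S x :=
        mul_nonneg (by linarith [e_le_one n]) (margProb_nonneg hp.1 _ _)
      have h2 : δ ≤ margProb q S x := (hδle x).trans (self_le_margProb hq.1 S x)
      nlinarith [e_pos n]
    have hub : ∀ (n : ℕ) (S : Finset ι) (x : ∀ i, α i),
        margProb (mix p q n) S x ≤ 1 := fun n S x => margProb_le_one (hmixD n) S x
    have hpos : ∀ (n : ℕ) (S : Finset ι) (x : ∀ i, α i),
        0 < margProb (mix p q n) S x := fun n S x =>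
      lt_of_lt_of_le (mul_pos (e_pos n) hδpos) (hlb n S x)
    -- ratio bounds
    have hratlb : ∀ (n : ℕ) {S S' : Finset ι} (_ : S ⊆ S') (x : ∀ i, α i),
        ((n : ℝ) + 1)⁻¹ * δ ≤
          margProb (mix p q n) S' x / margProb (mix p q n) S x := by
      intro n S S' hSS' x
      rw [le_div_iff₀ (hpos n S x)]
      calc ((n : ℝ) + 1)⁻¹ * δ * margProb (mix p q n) S x
          ≤ ((n : ℝ) + 1)⁻¹ * δ * 1 := by
            have := hub n S x
            have h0 : 0 ≤ ((n : ℝ) + 1)⁻¹ * δ := le_of_lt (mul_pos (e_pos n) hδpos)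
            nlinarith
        _ = ((n : ℝ) + 1)⁻¹ * δ := mul_one _
        _ ≤ margProb (mix p q n) S' x := hlb n S' x
    have hratub : ∀ (n : ℕ) {S S' : Finset ι} (_ : S ⊆ S') (x : ∀ i, α i),
        margProb (mix p q n) S' x / margProb (mix p q n) S x ≤ 1 := by
      intro n S S' hSS' x
      rw [div_le_one (hpos n S x)]
      exact margProb_mono (hmixD n).1 hSS' x
    -- bounds for the three factors
    set Ky := (Fintype.card (α y) : ℝ) with hKy
    set Kx := (Fintype.card (α X) : ℝ) with hKx
    have hKy1 : (1:ℝ) ≤ Ky := by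
      rw [hKy]; exact_mod_cast Fintype.card_pos
    have hKx1 : (1:ℝ) ≤ Kx := by
      rw [hKx]; exact_mod_cast Fintype.card_pos
    have hAbnd : ∀ n : ℕ, (((n : ℝ) + 1)⁻¹ * δ) ^ 2 ≤ pmiFstarX (mix p q n) y X L w ∧
        pmiFstarX (mix p q n) y X L w ≤ Ky := by
      intro n
      constructor
      · rw [hfX n]
        have hterm : (((n : ℝ) + 1)⁻¹ * δ) ^ 2 ≤
            (margProb (mix p q n) (insert y (insert X L))
                (Function.update w y (w y)) /
              margProb (mix p q n) (insert y L) (Function.update w y (w y))) *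
              margProb (mix p q n) {y} (Function.update w y (w y)) := by
          have h1 := hratlb n hsubYL (Function.update w y (w y))
          have h2 := hlb n {y} (Function.update w y (w y))
          have h0 : 0 ≤ ((n : ℝ) + 1)⁻¹ * δ := le_of_lt (mul_pos (e_pos n) hδpos)
          calc (((n : ℝ) + 1)⁻¹ * δ) ^ 2 = (((n : ℝ) + 1)⁻¹ * δ) * (((n : ℝ) + 1)⁻¹ * δ) := sq _
            _ ≤ _ := by
              refine mul_le_mul h1 h2 h0 ?_
              exact div_nonneg (margProb_nonneg (hmixD n).1 _ _)
                (margProb_nonneg (hmixD n).1 _ _)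
        refine hterm.trans ?_
        exact Finset.single_le_sum (f := fun u =>
          (margProb (mix p q n) (insert y (insert X L)) (Function.update w y u) /
            margProb (mix p q n) (insert y L) (Function.update w y u)) *
            margProb (mix p q n) {y} (Function.update w y u))
          (fun u _ => mul_nonneg (div_nonneg (margProb_nonneg (hmixD n).1 _ _)
            (margProb_nonneg (hmixD n).1 _ _)) (margProb_nonneg (hmixD n).1 _ _))
          (Finset.mem_univ (w y))
      · rw [hfX n]
        calc (∑ u : α y, (margProb (mix p q n) (insert y (insert X L))
              (Function.update w y u) /
            margProb (mix p q n) (insert y L) (Function.update w y u)) *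
            margProb (mix p q n) {y} (Function.update w y u))
            ≤ ∑ _u : α y, (1:ℝ) := by
              refine Finset.sum_le_sum fun u _ => ?_
              have h1 := hratub n hsubYL (Function.update w y u)
              have h2 := hub n {y} (Function.update w y u)
              have h3 : 0 ≤ margProb (mix p q n) {y} (Function.update w y u) :=
                margProb_nonneg (hmixD n).1 _ _
              have h4 : 0 ≤ margProb (mix p q n) (insert y (insert X L))
                  (Function.update w y u) /
                  margProb (mix p q n) (insert y L) (Function.update w y u) :=
                div_nonneg (margProb_nonneg (hmixD n).1 _ _) (margProb_nonneg (hmixD n).1 _ _)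
              nlinarith
          _ = Ky := by simp [hKy, Finset.card_univ]
    have hBbnd : ∀ n : ℕ, (((n : ℝ) + 1)⁻¹ * δ) ^ 2 ≤ pmiFstarY (mix p q n) y X L w ∧
        pmiFstarY (mix p q n) y X L w ≤ Kx := by
      intro n
      constructor
      · rw [hfY n]
        have hterm : (((n : ℝ) + 1)⁻¹ * δ) ^ 2 ≤
            (margProb (mix p q n) (insert y (insert X L))
                (Function.update w X (w X)) /
              margProb (mix p q n) (insert X L) (Function.update w X (w X))) *
              margProb (mix p q n) {X} (Function.update w X (w X)) := by
          have h1 := hratlb n hsubXL (Function.update w X (w X))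
          have h2 := hlb n {X} (Function.update w X (w X))
          have h0 : 0 ≤ ((n : ℝ) + 1)⁻¹ * δ := le_of_lt (mul_pos (e_pos n) hδpos)
          calc (((n : ℝ) + 1)⁻¹ * δ) ^ 2 = (((n : ℝ) + 1)⁻¹ * δ) * (((n : ℝ) + 1)⁻¹ * δ) := sq _
            _ ≤ _ := by
              refine mul_le_mul h1 h2 h0 ?_
              exact div_nonneg (margProb_nonneg (hmixD n).1 _ _)
                (margProb_nonneg (hmixD n).1 _ _)
        refine hterm.trans ?_
        exact Finset.single_le_sum (f := fun v =>
          (margProb (mix p q n) (insert y (insert X L)) (Function.update w X v) /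
            margProb (mix p q n) (insert X L) (Function.update w X v)) *
            margProb (mix p q n) {X} (Function.update w X v))
          (fun v _ => mul_nonneg (div_nonneg (margProb_nonneg (hmixD n).1 _ _)
            (margProb_nonneg (hmixD n).1 _ _)) (margProb_nonneg (hmixD n).1 _ _))
          (Finset.mem_univ (w X))
      · rw [hfY n]
        calc (∑ v : α X, (margProb (mix p q n) (insert y (insert X L))
              (Function.update w X v) /
            margProb (mix p q n) (insert X L) (Function.update w X v)) *
            margProb (mix p q n) {X} (Function.update w X v))
            ≤ ∑ _v : α X, (1:ℝ) := by
              refine Finset.sum_le_sum fun v _ => ?_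
              have h1 := hratub n hsubXL (Function.update w X v)
              have h2 := hub n {X} (Function.update w X v)
              have h3 : 0 ≤ margProb (mix p q n) {X} (Function.update w X v) :=
                margProb_nonneg (hmixD n).1 _ _
              have h4 : 0 ≤ margProb (mix p q n) (insert y (insert X L))
                  (Function.update w X v) /
                  margProb (mix p q n) (insert X L) (Function.update w X v) :=
                div_nonneg (margProb_nonneg (hmixD n).1 _ _) (margProb_nonneg (hmixD n).1 _ _)
              nlinarith
          _ = Kx := by simp [hKx, Finset.card_univ]
    -- the squeeze bound
    set C : ℝ := 5 * |Real.log δ| + Real.log Ky + Real.log Kx with hC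
    have hbound : ∀ n : ℕ, |mix p q n w * Real.log
        ((margProb (mix p q n) (insert y (insert X L)) w / margProb (mix p q n) L w) /
          (pmiFstarX (mix p q n) y X L w * pmiFstarY (mix p q n) y X L w))| ≤
        ((n : ℝ) + 1)⁻¹ * (C + 5 * |Real.log (((n : ℝ) + 1)⁻¹)|) := by
      intro n
      set E := ((n : ℝ) + 1)⁻¹ with hE
      have hEpos : 0 < E := e_pos n
      have hEδ : 0 < E * δ := mul_pos hEpos hδpos
      set N := margProb (mix p q n) (insert y (insert X L)) w / margProb (mix p q n) L w
        with hNdef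
      set A := pmiFstarX (mix p q n) y X L w with hAdef
      set B := pmiFstarY (mix p q n) y X L w with hBdef
      have hNl : E * δ ≤ N := hratlb n hsubL w
      have hNu : N ≤ 1 := hratub n hsubL w
      have hAl : (E * δ) ^ 2 ≤ A := (hAbnd n).1
      have hAu : A ≤ Ky := (hAbnd n).2
      have hBl : (E * δ) ^ 2 ≤ B := (hBbnd n).1
      have hBu : B ≤ Kx := (hBbnd n).2
      have hNpos : 0 < N := lt_of_lt_of_le hEδ hNl
      have hApos : 0 < A := lt_of_lt_of_le (pow_pos hEδ 2) hAl
      have hBpos : 0 < B := lt_of_lt_of_le (pow_pos hEδ 2) hBl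
      have hlogsplit : Real.log (N / (A * B)) = Real.log N - (Real.log A + Real.log B) := by
        rw [Real.log_div (ne_of_gt hNpos) (ne_of_gt (mul_pos hApos hBpos)),
          Real.log_mul (ne_of_gt hApos) (ne_of_gt hBpos)]
      have hlogN : |Real.log N| ≤ |Real.log (E * δ)| := by
        have := abs_log_le hEδ hNl hNu
        simpa using this
      have hlogA : |Real.log A| ≤ 2 * |Real.log (E * δ)| + Real.log Ky := by
        have h := abs_log_le (pow_pos hEδ 2) hAl hAu
        rw [Real.log_pow, Nat.cast_ofNat, abs_mul, abs_two] at h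
        rw [abs_of_nonneg (Real.log_nonneg hKy1)] at h
        linarith
      have hlogB : |Real.log B| ≤ 2 * |Real.log (E * δ)| + Real.log Kx := by
        have h := abs_log_le (pow_pos hEδ 2) hBl hBu
        rw [Real.log_pow, Nat.cast_ofNat, abs_mul, abs_two] at h
        rw [abs_of_nonneg (Real.log_nonneg hKx1)] at h
        linarith
      have hlogEδ : |Real.log (E * δ)| ≤ |Real.log E| + |Real.log δ| := by
        rw [Real.log_mul (ne_of_gt hEpos) (ne_of_gt hδpos)]
        exact abs_add_le _ _
      have hlogtot : |Real.log (N / (A * B))| ≤ C + 5 * |Real.log E| := by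
        rw [hlogsplit]
        have h1 : |Real.log N - (Real.log A + Real.log B)| ≤
            |Real.log N| + (|Real.log A| + |Real.log B|) :=
          (abs_sub _ _).trans (add_le_add_right (abs_add_le _ _) _)
        rw [hC]
        linarith
      have hmixw : mix p q n w ≤ E := by
        have : mix p q n w = E * q w := by unfold mix; rw [hp0]; ring
        rw [this]
        have hq1 : q w ≤ 1 := by
          have h1 := self_le_margProb hq.1 ∅ w
          rwa [margProb_empty hq] at h1
        nlinarith
      have hmixnn : 0 ≤ mix p q n w := (mix_isDist hp hq n).1 w
      rw [abs_mul, abs_of_nonneg hmixnn]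
      have hCpos : 0 ≤ C + 5 * |Real.log E| := by
        have := abs_nonneg (Real.log δ)
        have := Real.log_nonneg hKy1
        have := Real.log_nonneg hKx1
        have := abs_nonneg (Real.log E)
        rw [hC]; linarith
      exact mul_le_mul hmixw hlogtot (abs_nonneg _) (le_of_lt hEpos)
    -- the bound tends to zero
    have hgt : Filter.Tendsto
        (fun n : ℕ => ((n : ℝ) + 1)⁻¹ * (C + 5 * |Real.log (((n : ℝ) + 1)⁻¹)|))
        Filter.atTop (nhds 0) := by
      have h1 : Filter.Tendsto (fun n : ℕ => ((n : ℝ) + 1)⁻¹ * C) Filter.atTop (nhds 0) := by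
        have := tendsto_e.mul_const C
        simpa using this
      have h2 : Filter.Tendsto (fun n : ℕ => ((n : ℝ) + 1)⁻¹ * |Real.log (((n : ℝ) + 1)⁻¹)|)
          Filter.atTop (nhds 0) := by
        have base : Filter.Tendsto (fun x : ℝ => Real.log x / x) Filter.atTop (nhds 0) :=
          Real.isLittleO_log_id_atTop.tendsto_div_nhds_zero
        have comp : Filter.Tendsto (fun n : ℕ => ((n : ℝ) + 1)) Filter.atTop Filter.atTop :=
          Filter.tendsto_atTop_add_const_right _ 1 tendsto_natCast_atTop_atTop
        refine (base.comp comp).congr fun n => ?_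
        have hn1 : (1:ℝ) ≤ (n : ℝ) + 1 := by
          have : (0:ℝ) ≤ (n:ℝ) := Nat.cast_nonneg n
          linarith
        have : Real.log (((n : ℝ) + 1)⁻¹) = -Real.log ((n : ℝ) + 1) := Real.log_inv _
        rw [Function.comp_apply, this, abs_neg, abs_of_nonneg (Real.log_nonneg hn1)]
        rw [div_eq_inv_mul]
      have := h1.add (h2.const_mul 5)
      simp only [add_zero, mul_zero, zero_add] at this
      refine this.congr fun n => by ring
    exact squeeze_zero_norm (fun n => by
      rw [Real.norm_eq_abs]; exact hbound n) hgt
/-- Coordinate factors: `μ` at coordinate `y`, uniform elsewhere. -/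
def gfun (y : ι) (μ : α y → ℝ) : ∀ i, α i → ℝ :=
  fun i => if h : i = y then (fun a => μ (h ▸ a)) else (fun _ => (Fintype.card (α i) : ℝ)⁻¹)

lemma gfun_self (y : ι) (μ : α y → ℝ) (a : α y) : gfun y μ y a = μ a := by
  simp [gfun]

lemma gfun_ne (y : ι) (μ : α y → ℝ) {i : ι} (h : i ≠ y) (a : α i) :
    gfun y μ i a = (Fintype.card (α i) : ℝ)⁻¹ := by
  simp [gfun, h]

variable [∀ i, Nonempty (α i)]

lemma gfun_pos (y : ι) {μ : α y → ℝ} (hμ : ∀ u, 0 < μ u) (i : ι) (a : α i) :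
    0 < gfun y μ i a := by
  by_cases h : i = y
  · subst h; rw [gfun_self]; exact hμ a
  · rw [gfun_ne y μ h]
    have : 0 < Fintype.card (α i) := Fintype.card_pos
    positivity

lemma gfun_sum (y : ι) {μ : α y → ℝ} (hμ : ∑ u, μ u = 1) (i : ι) :
    ∑ a, gfun y μ i a = 1 := by
  by_cases h : i = y
  · subst h
    simp only [gfun_self]
    exact hμ
  · simp only [gfun_ne y μ h]
    rw [Finset.sum_const, Finset.card_univ, nsmul_eq_mul]
    have : (0:ℝ) < Fintype.card (α i) := by exact_mod_cast Fintype.card_pos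
    field_simp

/-- The product fill distribution: `μ` on coordinate `y`, uniform on the others. -/
def qdist (y : ι) (μ : α y → ℝ) : (∀ i, α i) → ℝ := fun w => ∏ i, gfun y μ i (w i)

lemma qdist_pos (y : ι) {μ : α y → ℝ} (hμ : ∀ u, 0 < μ u) (w : ∀ i, α i) :
    0 < qdist y μ w :=
  Finset.prod_pos fun i _ => gfun_pos y hμ i (w i)

lemma qdist_isDist (y : ι) {μ : α y → ℝ} (hμp : ∀ u, 0 < μ u) (hμs : ∑ u, μ u = 1) :
    IsDist (qdist y μ) := by
  constructor
  · exact fun w => le_of_lt (qdist_pos y hμp w)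
  · have h := (Fintype.prod_sum (fun i (v : α i) => gfun y μ i v)).symm
    calc ∑ w, qdist y μ w = ∏ i, ∑ v, gfun y μ i v := h
      _ = 1 := by
          rw [Finset.prod_congr rfl fun i _ => gfun_sum y hμs i]
          simp

lemma margProb_qdist (y : ι) {μ : α y → ℝ} (hμs : ∑ u, μ u = 1) (S : Finset ι)
    (x : ∀ i, α i) : margProb (qdist y μ) S x = ∏ i ∈ S, gfun y μ i (x i) :=
  margProb_prod (gfun y μ) (gfun_sum y hμs) S x

lemma margProb_qdist_insert_ne (y : ι) {μ : α y → ℝ} (hμs : ∑ u, μ u = 1) {j : ι}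
    (hjy : j ≠ y) {S : Finset ι} (hjS : j ∉ S) (x : ∀ i, α i) :
    margProb (qdist y μ) (insert j S) x =
      (Fintype.card (α j) : ℝ)⁻¹ * margProb (qdist y μ) S x := by
  rw [margProb_qdist y hμs, margProb_qdist y hμs, Finset.prod_insert hjS, gfun_ne y μ hjy]

lemma margProb_qdist_insert_y (y : ι) {μ : α y → ℝ} (hμs : ∑ u, μ u = 1)
    {S : Finset ι} (hyS : y ∉ S) (x : ∀ i, α i) :
    margProb (qdist y μ) (insert y S) x = μ (x y) * margProb (qdist y μ) S x := by
  rw [margProb_qdist y hμs, margProb_qdist y hμs, Finset.prod_insert hyS, gfun_self]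
/-- The "determined" part of `Blim` (independent of the fill distribution). -/
def Gfun (p : (∀ i, α i) → ℝ) (y X : ι) (L : Finset ι) (w : ∀ i, α i) : ℝ :=
  ∑ v : α X, if 0 < margProb p (insert X L) (Function.update w X v) then
    (margProb p (insert y (insert X L)) (Function.update w X v) /
      margProb p (insert X L) (Function.update w X v)) *
      margProb p {X} (Function.update w X v)
  else 0

/-- The total probability of the undetermined conditionals in `Blim`. -/
def Dfun (p : (∀ i, α i) → ℝ) (X : ι) (L : Finset ι) (w : ∀ i, α i) : ℝ :=
  ∑ v : α X, if 0 < margProb p (insert X L) (Function.update w X v) then 0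
    else margProb p {X} (Function.update w X v)

/-- The μ-dependent part of the limit values. -/
def philog (p : (∀ i, α i) → ℝ) (y X : ι) (L : Finset ι) (μ : α y → ℝ) : ℝ :=
  ∑ w, p w * Real.log (Gfun p y X L w + μ (w y) * Dfun p X L w)

lemma Gfun_nonneg {p : (∀ i, α i) → ℝ} (hp : ∀ w, 0 ≤ p w) (y X : ι) (L : Finset ι)
    (w : ∀ i, α i) : 0 ≤ Gfun p y X L w := by
  refine Finset.sum_nonneg fun v _ => ?_
  split_ifs
  · exact mul_nonneg (div_nonneg (margProb_nonneg hp _ _) (margProb_nonneg hp _ _))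
      (margProb_nonneg hp _ _)
  · exact le_refl 0

lemma Dfun_nonneg {p : (∀ i, α i) → ℝ} (hp : ∀ w, 0 ≤ p w) (X : ι) (L : Finset ι)
    (w : ∀ i, α i) : 0 ≤ Dfun p X L w := by
  refine Finset.sum_nonneg fun v _ => ?_
  split_ifs
  · exact le_refl 0
  · exact margProb_nonneg hp _ _

lemma Gfun_pos {p : (∀ i, α i) → ℝ} (hp : ∀ w, 0 ≤ p w) (y X : ι) (L : Finset ι)
    {w : ∀ i, α i} (hpw : 0 < p w) : 0 < Gfun p y X L w := by
  have hXLw : 0 < margProb p (insert X L) (Function.update w X (w X)) := by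
    rw [Function.update_eq_self]; exact margProb_pos hp hpw _
  have hterm : 0 < (if 0 < margProb p (insert X L) (Function.update w X (w X)) then
      (margProb p (insert y (insert X L)) (Function.update w X (w X)) /
        margProb p (insert X L) (Function.update w X (w X))) *
        margProb p {X} (Function.update w X (w X))
      else 0) := by
    rw [if_pos hXLw, Function.update_eq_self]
    exact mul_pos (div_pos (margProb_pos hp hpw _) (margProb_pos hp hpw _))
      (margProb_pos hp hpw _)
  refine lt_of_lt_of_le hterm ?_
  refine Finset.single_le_sum (f := fun v => if 0 < margProb p (insert X L)
      (Function.update w X v) then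
      (margProb p (insert y (insert X L)) (Function.update w X v) /
        margProb p (insert X L) (Function.update w X v)) *
        margProb p {X} (Function.update w X v)
    else 0) (fun v _ => ?_) (Finset.mem_univ (w X))
  split_ifs
  · exact mul_nonneg (div_nonneg (margProb_nonneg hp _ _) (margProb_nonneg hp _ _))
      (margProb_nonneg hp _ _)
  · exact le_refl 0

variable [∀ i, Nonempty (α i)]

lemma Blim_qdist {p : (∀ i, α i) → ℝ} {y X : ι} {L : Finset ι} {μ : α y → ℝ}
    (hμp : ∀ u, 0 < μ u) (hμs : ∑ u, μ u = 1) (hXy : X ≠ y) (hyXL : y ∉ insert X L)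
    (w : ∀ i, α i) :
    Blim p (qdist y μ) y X L w = Gfun p y X L w + μ (w y) * Dfun p X L w := by
  unfold Blim Gfun Dfun
  rw [Finset.mul_sum, ← Finset.sum_add_distrib]
  refine Finset.sum_congr rfl fun v _ => ?_
  unfold Rlim
  by_cases h : 0 < margProb p (insert X L) (Function.update w X v)
  · rw [if_pos h, if_pos h, if_pos h]
    ring
  · rw [if_neg h, if_neg h, if_neg h]
    have hq' : margProb (qdist y μ) (insert y (insert X L)) (Function.update w X v) =
        μ ((Function.update w X v) y) *
          margProb (qdist y μ) (insert X L) (Function.update w X v) :=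
      margProb_qdist_insert_y y hμs (fun hy => hyXL hy) _
    have hqpos : 0 < margProb (qdist y μ) (insert X L) (Function.update w X v) :=
      margProb_pos (fun w' => le_of_lt (qdist_pos y hμp w')) (qdist_pos y hμp _) _
    rw [hq', mul_div_assoc, div_self (ne_of_gt hqpos), mul_one,
      Function.update_of_ne (Ne.symm hXy)]
    ring

lemma Alim_qdist {p : (∀ i, α i) → ℝ} {y X : ι} {L : Finset ι} {μ : α y → ℝ}
    (hμp : ∀ u, 0 < μ u) (hμs : ∑ u, μ u = 1) (hXy : X ≠ y) (hXyL : X ∉ insert y L)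
    (w : ∀ i, α i) :
    Alim p (qdist y μ) y X L w = ∑ u : α y,
      (if 0 < margProb p (insert y L) (Function.update w y u) then
        margProb p (insert y (insert X L)) (Function.update w y u) /
          margProb p (insert y L) (Function.update w y u)
      else (Fintype.card (α X) : ℝ)⁻¹) * margProb p {y} (Function.update w y u) := by
  unfold Alim Rlim
  refine Finset.sum_congr rfl fun u _ => ?_
  by_cases h : 0 < margProb p (insert y L) (Function.update w y u)
  · rw [if_pos h, if_pos h]
  · rw [if_neg h, if_neg h]
    have hcomm : insert y (insert X L) = insert X (insert y L) := Finset.insert_comm y X L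
    have hq' : margProb (qdist y μ) (insert y (insert X L)) (Function.update w y u) =
        (Fintype.card (α X) : ℝ)⁻¹ *
          margProb (qdist y μ) (insert y L) (Function.update w y u) := by
      rw [hcomm]
      exact margProb_qdist_insert_ne y hμs hXy hXyL _
    have hqpos : 0 < margProb (qdist y μ) (insert y L) (Function.update w y u) :=
      margProb_pos (fun w' => le_of_lt (qdist_pos y hμp w')) (qdist_pos y hμp _) _
    rw [hq', mul_div_assoc, div_self (ne_of_gt hqpos), mul_one]

lemma climit_qdist_sum {p : (∀ i, α i) → ℝ} (hp : IsDist p) {y X : ι} {L : Finset ι}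
    {μ : α y → ℝ} (hμp : ∀ u, 0 < μ u) (hμs : ∑ u, μ u = 1) (hXy : X ≠ y)
    (hyXL : y ∉ insert X L) (hXyL : X ∉ insert y L) :
    ∑ w, climit p (qdist y μ) y X L w =
      (∑ w, p w * (Real.log (margProb p (insert y (insert X L)) w / margProb p L w) -
        Real.log (∑ u : α y,
          (if 0 < margProb p (insert y L) (Function.update w y u) then
            margProb p (insert y (insert X L)) (Function.update w y u) /
              margProb p (insert y L) (Function.update w y u)
          else (Fintype.card (α X) : ℝ)⁻¹) * margProb p {y} (Function.update w y u)))) -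
      philog p y X L μ := by
  unfold philog
  rw [← Finset.sum_sub_distrib]
  refine Finset.sum_congr rfl fun w _ => ?_
  by_cases hpw : 0 < p w
  · unfold climit
    rw [Alim_qdist hμp hμs hXy hXyL w, Blim_qdist hμp hμs hXy hyXL w]
    have hL : 0 < margProb p L w := margProb_pos hp.1 hpw L
    have hYL : 0 < margProb p (insert y L) w := margProb_pos hp.1 hpw _
    have hYXL : 0 < margProb p (insert y (insert X L)) w := margProb_pos hp.1 hpw _
    have hN : Rlim p (qdist y μ) (insert y (insert X L)) L w =
        margProb p (insert y (insert X L)) w / margProb p L w := by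
      unfold Rlim; rw [if_pos hL]
    rw [hN]
    have hNpos : 0 < margProb p (insert y (insert X L)) w / margProb p L w :=
      div_pos hYXL hL
    set AA := ∑ u : α y,
      (if 0 < margProb p (insert y L) (Function.update w y u) then
        margProb p (insert y (insert X L)) (Function.update w y u) /
          margProb p (insert y L) (Function.update w y u)
      else (Fintype.card (α X) : ℝ)⁻¹) * margProb p {y} (Function.update w y u) with hAA
    have hAApos : 0 < AA := by
      have hterm : 0 < (if 0 < margProb p (insert y L) (Function.update w y (w y)) then
          margProb p (insert y (insert X L)) (Function.update w y (w y)) /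
            margProb p (insert y L) (Function.update w y (w y))
        else (Fintype.card (α X) : ℝ)⁻¹) * margProb p {y} (Function.update w y (w y)) := by
        rw [Function.update_eq_self, if_pos hYL]
        exact mul_pos (div_pos hYXL hYL) (margProb_pos hp.1 hpw _)
      refine lt_of_lt_of_le hterm ?_
      refine Finset.single_le_sum (f := fun u =>
        (if 0 < margProb p (insert y L) (Function.update w y u) then
          margProb p (insert y (insert X L)) (Function.update w y u) /
            margProb p (insert y L) (Function.update w y u)
        else (Fintype.card (α X) : ℝ)⁻¹) * margProb p {y} (Function.update w y u))
        (fun u _ => ?_) (Finset.mem_univ (w y))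
      have hKx : (0:ℝ) ≤ (Fintype.card (α X) : ℝ)⁻¹ := by positivity
      refine mul_nonneg ?_ (margProb_nonneg hp.1 _ _)
      split_ifs
      · exact div_nonneg (margProb_nonneg hp.1 _ _) (margProb_nonneg hp.1 _ _)
      · exact hKx
    have hBpos : 0 < Gfun p y X L w + μ (w y) * Dfun p X L w := by
      have h1 := Gfun_pos hp.1 y X L hpw
      have h2 := mul_nonneg (le_of_lt (hμp (w y))) (Dfun_nonneg hp.1 X L w)
      linarith
    rw [Real.log_div (ne_of_gt hNpos) (ne_of_gt (mul_pos hAApos hBpos)),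
      Real.log_mul (ne_of_gt hAApos) (ne_of_gt hBpos)]
    ring
  · have hp0 : p w = 0 := le_antisymm (not_lt.1 hpw) (hp.1 w)
    unfold climit
    rw [hp0]
    ring

lemma philog_pair_lt {p : (∀ i, α i) → ℝ} (hp : IsDist p) {y X : ι} {L : Finset ι}
    {μa μb : α y → ℝ} (hap : ∀ u, 0 < μa u) (hbp : ∀ u, 0 < μb u)
    {w₀ : ∀ i, α i} (hw₀ : 0 < p w₀) (hD : 0 < Dfun p X L w₀)
    (hne : μa (w₀ y) ≠ μb (w₀ y)) :
    (philog p y X L μa + philog p y X L μb) / 2 <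
      philog p y X L (fun u => (μa u + μb u) / 2) := by
  have hLHS : (philog p y X L μa + philog p y X L μb) / 2 =
      ∑ w, p w * ((Real.log (Gfun p y X L w + μa (w y) * Dfun p X L w) +
        Real.log (Gfun p y X L w + μb (w y) * Dfun p X L w)) / 2) := by
    unfold philog
    rw [← Finset.sum_add_distrib, Finset.sum_div]
    refine Finset.sum_congr rfl fun w _ => by ring
  rw [hLHS]
  unfold philog
  refine Finset.sum_lt_sum (fun w _ => ?_) ⟨w₀, Finset.mem_univ w₀, ?_⟩
  · by_cases hpw : 0 < p w
    · set A := Gfun p y X L w + μa (w y) * Dfun p X L w with hA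
      set B := Gfun p y X L w + μb (w y) * Dfun p X L w with hB
      have hApos : 0 < A := by
        have := Gfun_pos hp.1 y X L hpw
        have := mul_nonneg (le_of_lt (hap (w y))) (Dfun_nonneg hp.1 X L w)
        rw [hA]; linarith
      have hBpos : 0 < B := by
        have := Gfun_pos hp.1 y X L hpw
        have := mul_nonneg (le_of_lt (hbp (w y))) (Dfun_nonneg hp.1 X L w)
        rw [hB]; linarith
      have hcc := strictConcaveOn_log_Ioi.concaveOn.2 (Set.mem_Ioi.2 hApos)
        (Set.mem_Ioi.2 hBpos) (by norm_num : (0:ℝ) ≤ 1/2) (by norm_num : (0:ℝ) ≤ 1/2)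
        (by norm_num : (1:ℝ)/2 + 1/2 = 1)
      simp only [smul_eq_mul] at hcc
      have hmid : Gfun p y X L w + ((μa (w y) + μb (w y)) / 2) * Dfun p X L w =
          1/2 * A + 1/2 * B := by rw [hA, hB]; ring
      have : (Real.log A + Real.log B) / 2 ≤
          Real.log (Gfun p y X L w + ((μa (w y) + μb (w y)) / 2) * Dfun p X L w) := by
        rw [hmid]
        calc (Real.log A + Real.log B) / 2 = 1/2 * Real.log A + 1/2 * Real.log B := by ring
          _ ≤ Real.log (1/2 * A + 1/2 * B) := hcc
      exact mul_le_mul_of_nonneg_left this (hp.1 w)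
    · have hp0 : p w = 0 := le_antisymm (not_lt.1 hpw) (hp.1 w)
      rw [hp0, zero_mul, zero_mul]
  · set A := Gfun p y X L w₀ + μa (w₀ y) * Dfun p X L w₀ with hA
    set B := Gfun p y X L w₀ + μb (w₀ y) * Dfun p X L w₀ with hB
    have hApos : 0 < A := by
      have := Gfun_pos hp.1 y X L hw₀
      have := mul_nonneg (le_of_lt (hap (w₀ y))) (Dfun_nonneg hp.1 X L w₀)
      rw [hA]; linarith
    have hBpos : 0 < B := by
      have := Gfun_pos hp.1 y X L hw₀
      have := mul_nonneg (le_of_lt (hbp (w₀ y))) (Dfun_nonneg hp.1 X L w₀)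
      rw [hB]; linarith
    have hAB : A ≠ B := by
      rw [hA, hB]
      intro h
      have h2 : (μa (w₀ y) - μb (w₀ y)) * Dfun p X L w₀ = 0 := by linarith
      rcases mul_eq_zero.1 h2 with h3 | h3
      · exact hne (by linarith [sub_eq_zero.1 h3])
      · exact (ne_of_gt hD) h3
    have hcc := strictConcaveOn_log_Ioi.2 (Set.mem_Ioi.2 hApos) (Set.mem_Ioi.2 hBpos)
      hAB (by norm_num : (0:ℝ) < 1/2) (by norm_num : (0:ℝ) < 1/2)
      (by norm_num : (1:ℝ)/2 + 1/2 = 1)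
    simp only [smul_eq_mul] at hcc
    have hmid : Gfun p y X L w₀ + ((μa (w₀ y) + μb (w₀ y)) / 2) * Dfun p X L w₀ =
        1/2 * A + 1/2 * B := by rw [hA, hB]; ring
    have hstrict : (Real.log A + Real.log B) / 2 <
        Real.log (Gfun p y X L w₀ + ((μa (w₀ y) + μb (w₀ y)) / 2) * Dfun p X L w₀) := by
      rw [hmid]
      calc (Real.log A + Real.log B) / 2 = 1/2 * Real.log A + 1/2 * Real.log B := by ring
        _ < Real.log (1/2 * A + 1/2 * B) := hcc
    exact mul_lt_mul_of_pos_left hstrict hw₀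

lemma tendsto_tvDist_mix (p q : (∀ i, α i) → ℝ) :
    Filter.Tendsto (fun n => tvDist (mix p q n) p) Filter.atTop (nhds 0) := by
  have heq : ∀ n : ℕ, tvDist (mix p q n) p = ((n : ℝ) + 1)⁻¹ * tvDist q p := by
    intro n
    unfold tvDist mix
    rw [← mul_div_assoc, Finset.mul_sum]
    congr 1
    refine Finset.sum_congr rfl fun w _ => ?_
    have h1 : (1 - ((n : ℝ) + 1)⁻¹) * p w + ((n : ℝ) + 1)⁻¹ * q w - p w =
        ((n : ℝ) + 1)⁻¹ * (q w - p w) := by ring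
    rw [h1, abs_mul, abs_of_nonneg (le_of_lt (e_pos n))]
  have := tendsto_e.mul_const (tvDist q p)
  rw [zero_mul] at this
  exact this.congr fun n => (heq n).symm

lemma PMIIDefined_of_pos {p' : (∀ i, α i) → ℝ} (hpos : ∀ w, 0 < p' w) (y X : ι)
    (L : Finset ι) : PMIIDefined p' y X L := by
  intro w _
  have hnn : ∀ w', 0 ≤ p' w' := fun w' => le_of_lt (hpos w')
  exact ⟨fun _ => margProb_pos hnn (hpos w) _, fun _ => margProb_pos hnn (hpos w) _⟩
end PMIAux
variable [∀ i, Nonempty (α i)]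

open PMIAux in
/-- Proposition 2, part-mutual-information part: if `X` belongs to some
but not every Markov boundary of `Y` within `T`, and `L = T \ {X}`, then there are two
sequences of distributions, both converging to `P` in total variation, along which the
(everywhere well-defined) part mutual informations converge to two different limits. -/
theorem part_mutual_information_discontinuous_at_multiple_markov_boundaries
    (p : (∀ i, α i) → ℝ) (hp : IsDist p)
    (y X : ι) (T : Finset ι) (hyT : y ∉ T)
    (hin : ∃ M, MarkovBoundary p y T M ∧ X ∈ M)
    (hout : ∃ M, MarkovBoundary p y T M ∧ X ∉ M) :
    ∃ (P P' : ℕ → ((∀ i, α i) → ℝ)) (c c' : ℝ),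
      (∀ n, IsDist (P n)) ∧ (∀ n, IsDist (P' n)) ∧
      Filter.Tendsto (fun n => tvDist (P n) p) Filter.atTop (nhds 0) ∧
      Filter.Tendsto (fun n => tvDist (P' n) p) Filter.atTop (nhds 0) ∧
      (∀ n, PMIIDefined (P n) y X (T.erase X)) ∧
      (∀ n, PMIIDefined (P' n) y X (T.erase X)) ∧
      Filter.Tendsto (fun n => PMII (P n) y X (T.erase X)) Filter.atTop (nhds c) ∧
      Filter.Tendsto (fun n => PMII (P' n) y X (T.erase X)) Filter.atTop (nhds c') ∧
      c ≠ c' := by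
  classical
  obtain ⟨M, hM, hXM⟩ := hin
  obtain ⟨M', hM', hXM'⟩ := hout
  have hXT : X ∈ T := hM.1.1 hXM
  have hXy : X ≠ y := fun h => hyT (h ▸ hXT)
  have hyX : y ≠ X := Ne.symm hXy
  set L := T.erase X with hLdef
  have hXL : X ∉ L := Finset.notMem_erase X T
  have hyL : y ∉ L := fun h => hyT (Finset.mem_of_mem_erase h)
  have hyXL : y ∉ insert X L := by
    simp only [Finset.mem_insert]
    rintro (h | h)
    · exact hyX h
    · exact hyL h
  have hXyL : X ∉ insert y L := by
    simp only [Finset.mem_insert]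
    rintro (h | h)
    · exact hXy h
    · exact hXL h
  have hstar := star_lemma hp hXT hXy hM'.1 hXM'
  obtain ⟨w₀, v₀, hw₀p, hXv₀, hTv₀⟩ := defect_lemma hp hXT hXy hyT hM hXM hstar
  have hXLT : insert X L = T := Finset.insert_erase hXT
  -- positivity of the undetermined mass at w₀
  have hD : 0 < Dfun p X L w₀ := by
    have hterm : 0 < (if 0 < margProb p (insert X L) (Function.update w₀ X v₀) then 0
        else margProb p {X} (Function.update w₀ X v₀)) := by
      rw [hXLT, if_neg (by rw [hTv₀]; exact lt_irrefl 0)]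
      exact hXv₀
    refine lt_of_lt_of_le hterm ?_
    refine Finset.single_le_sum (f := fun v =>
      if 0 < margProb p (insert X L) (Function.update w₀ X v) then 0
      else margProb p {X} (Function.update w₀ X v)) (fun v _ => ?_) (Finset.mem_univ v₀)
    split_ifs
    · exact le_refl 0
    · exact margProb_nonneg hp.1 _ _
  -- at least two values for Y
  have hnt : Nontrivial (α y) := nontrivial_of_boundary_mem hM hXM
  have hkN : 2 ≤ Fintype.card (α y) := Fintype.one_lt_card
  set k : ℝ := (Fintype.card (α y) : ℝ) with hkdef
  have hk2 : (2:ℝ) ≤ k := by rw [hkdef]; exact_mod_cast hkN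
  have hkpos : (0:ℝ) < k := by linarith
  -- the three fill distributions
  set μa : α y → ℝ := fun _ => k⁻¹ with hμadef
  set μb : α y → ℝ := fun u => (2*k)⁻¹ + if u = w₀ y then (1/2:ℝ) else 0 with hμbdef
  have hμap : ∀ u, 0 < μa u := fun u => by simp only [hμadef]; positivity
  have hμbp : ∀ u, 0 < μb u := by
    intro u
    simp only [hμbdef]
    have h1 : (0:ℝ) < (2*k)⁻¹ := by positivity
    split_ifs <;> linarith
  have hμas : ∑ u, μa u = 1 := by
    simp only [hμadef]
    rw [Finset.sum_const, Finset.card_univ, nsmul_eq_mul, ← hkdef]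
    field_simp
  have hμbs : ∑ u, μb u = 1 := by
    simp only [hμbdef]
    rw [Finset.sum_add_distrib, Finset.sum_const, Finset.card_univ, nsmul_eq_mul, ← hkdef]
    rw [Finset.sum_ite_eq' Finset.univ (w₀ y) (fun _ => (1/2:ℝ))]
    rw [if_pos (Finset.mem_univ _)]
    field_simp [hkpos.ne']
    ring
  set μm : α y → ℝ := fun u => (μa u + μb u) / 2 with hμmdef
  have hμmp : ∀ u, 0 < μm u := fun u => by
    simp only [hμmdef]; exact div_pos (add_pos (hμap u) (hμbp u)) two_pos
  have hμms : ∑ u, μm u = 1 := by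
    simp only [hμmdef]
    rw [← Finset.sum_div, Finset.sum_add_distrib, hμas, hμbs]
    norm_num
  have hne : μa (w₀ y) ≠ μb (w₀ y) := by
    simp only [hμadef, hμbdef, if_pos rfl]
    intro h
    have hk0 : k ≠ 0 := hkpos.ne'
    field_simp at h
    rw [if_pos trivial] at h
    nlinarith
  have hlt := philog_pair_lt hp hμap hμbp hw₀p hD hne
  rw [← hμmdef] at hlt
  -- choose the pair with distinct limits
  have hpick : ∃ (μ1 μ2 : α y → ℝ), (∀ u, 0 < μ1 u) ∧ (∀ u, 0 < μ2 u) ∧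
      (∑ u, μ1 u = 1) ∧ (∑ u, μ2 u = 1) ∧
      philog p y X L μ1 ≠ philog p y X L μ2 := by
    by_cases hcase : philog p y X L μa = philog p y X L μm
    · refine ⟨μb, μm, hμbp, hμmp, hμbs, hμms, fun h => ?_⟩
      rw [hcase, h] at hlt
      linarith
    · exact ⟨μa, μm, hμap, hμmp, hμas, hμms, hcase⟩
  obtain ⟨μ1, μ2, hμ1p, hμ2p, hμ1s, hμ2s, hφ⟩ := hpick
  have hq1 : IsDist (qdist y μ1) := qdist_isDist y hμ1p hμ1s
  have hq2 : IsDist (qdist y μ2) := qdist_isDist y hμ2p hμ2s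
  have hq1pos : ∀ w, 0 < qdist y μ1 w := qdist_pos y hμ1p
  have hq2pos : ∀ w, 0 < qdist y μ2 w := qdist_pos y hμ2p
  refine ⟨fun n => mix p (qdist y μ1) n, fun n => mix p (qdist y μ2) n,
    ∑ w, climit p (qdist y μ1) y X L w, ∑ w, climit p (qdist y μ2) y X L w,
    fun n => mix_isDist hp hq1 n, fun n => mix_isDist hp hq2 n,
    tendsto_tvDist_mix p _, tendsto_tvDist_mix p _,
    fun n => PMIIDefined_of_pos (mix_pos hp.1 hq1pos n) y X L,
    fun n => PMIIDefined_of_pos (mix_pos hp.1 hq2pos n) y X L,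
    tendsto_PMII_mix hp hq1 hq1pos y X L,
    tendsto_PMII_mix hp hq2 hq2pos y X L, ?_⟩
  -- the two limits differ
  have hc1 := climit_qdist_sum hp hμ1p hμ1s hXy hyXL hXyL
  have hc2 := climit_qdist_sum hp hμ2p hμ2s hXy hyXL hXyL
  rw [hc1, hc2]
  intro h
  exact hφ (by linarith)
end
end

section
/- (Strict data processing inequality, discrete case.) Let X and Y be discrete random variables and S₁ a collection of discrete random variables not containing X or Y. For 0 < ε ≤ 1, let X^ε be the ε-noise perturbation of X. Then CMI(X^ε, Y | S₁) ≤ CMI(X, Y | S₁), and equality holds if and only if CMI(X, Y | S₁) = 0. -/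
open scoped BigOperators

noncomputable section

variable {𝕏 𝕐 𝕊 : Type*} [Fintype 𝕏] [Fintype 𝕐] [Fintype 𝕊]
  [Nonempty 𝕏] [Nonempty 𝕐] [Nonempty 𝕊]

/-- Marginal pmf of the conditioning collection `S₁`. -/
def fS (p : 𝕏 × 𝕐 × 𝕊 → ℝ) (s : 𝕊) : ℝ := ∑ x, ∑ y, p (x, y, s)

/-- Marginal pmf of `(X, S₁)`. -/
def fXS (p : 𝕏 × 𝕐 × 𝕊 → ℝ) (x : 𝕏) (s : 𝕊) : ℝ := ∑ y, p (x, y, s)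

/-- Marginal pmf of `(Y, S₁)`. -/
def fYS (p : 𝕏 × 𝕐 × 𝕊 → ℝ) (y : 𝕐) (s : 𝕊) : ℝ := ∑ x, p (x, y, s)

/-- Conditional mutual information `CMI(X, Y | S₁)`
(with the convention `0 · log(junk) = 0` on zero-probability terms). -/
def CMI3 (p : 𝕏 × 𝕐 × 𝕊 → ℝ) : ℝ :=
  ∑ x, ∑ y, ∑ s, p (x, y, s) *
    Real.log ((p (x, y, s) * fS p s) / (fXS p x s * fYS p y s))

/-- Joint pmf of `(X^ε, Y, S₁)`, where `X^ε` equals `X` with probability `1 - ε` and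
otherwise equals an independent noise variable with pmf `qU`: the noise variable and the
Bernoulli(ε) switching indicator are jointly independent of `(X, Y, S₁)`. -/
def epsNoise (p : 𝕏 × 𝕐 × 𝕊 → ℝ) (qU : 𝕏 → ℝ) (ε : ℝ) : 𝕏 × 𝕐 × 𝕊 → ℝ :=
  fun w => (1 - ε) * p w + ε * qU w.1 * fYS p w.2.1 w.2.2

/-- Two-point log-sum inequality with the second pair equal. -/
lemma logsum2 (a b c : ℝ) (ha : 0 ≤ a) (hb : 0 ≤ b) (hc : 0 < c)
    (hab : 0 < a → 0 < b) :
    (a + c) * Real.log ((a + c) / (b + c)) ≤ a * Real.log (a / b) := by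
  rcases eq_or_lt_of_le ha with h0 | ha'
  · have : c * Real.log (c / (b + c)) ≤ 0 := by
      apply mul_nonpos_of_nonneg_of_nonpos hc.le
      apply Real.log_nonpos (by positivity)
      rw [div_le_one (by linarith)]; linarith
    simp only [← h0, zero_add, zero_mul]
    linarith
  · have hb' := hab ha'
    have hS : 0 < a + c := by linarith
    have hT : 0 < b + c := by linarith
    have h1 : Real.log (b * (a + c) / (a * (b + c))) ≤ b * (a + c) / (a * (b + c)) - 1 :=
      Real.log_le_sub_one_of_pos (by positivity)
    have h2 : Real.log ((a + c) / (b + c)) ≤ (a + c) / (b + c) - 1 :=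
      Real.log_le_sub_one_of_pos (by positivity)
    have e1 : Real.log (b * (a + c) / (a * (b + c))) =
        Real.log b + Real.log (a + c) - Real.log a - Real.log (b + c) := by
      rw [Real.log_div (by positivity) (by positivity),
        Real.log_mul hb'.ne' hS.ne', Real.log_mul ha'.ne' hT.ne']
      ring
    have e2 : Real.log ((a + c) / (b + c)) = Real.log (a + c) - Real.log (b + c) :=
      Real.log_div hS.ne' hT.ne'
    have e3 : Real.log (a / b) = Real.log a - Real.log b :=
      Real.log_div ha'.ne' hb'.ne'
    rw [e1] at h1
    rw [e2] at h2 ⊢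
    rw [e3]
    have H1 : a * (Real.log b + Real.log (a + c) - Real.log a - Real.log (b + c)) ≤
        b * (a + c) / (b + c) - a := by
      have := mul_le_mul_of_nonneg_left h1 ha'.le
      have key : a * (b * (a + c) / (a * (b + c)) - 1) = b * (a + c) / (b + c) - a := by
        field_simp
      linarith
    have H2 : c * (Real.log (a + c) - Real.log (b + c)) ≤ c * ((a + c) / (b + c)) - c := by
      have := mul_le_mul_of_nonneg_left h2 hc.le
      linarith [mul_le_mul_of_nonneg_left h2 hc.le]
    have key2 : b * (a + c) / (b + c) - a + (c * ((a + c) / (b + c)) - c) = 0 := by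
      field_simp; ring
    nlinarith [H1, H2]

lemma fS_eq_sum_fXS (p : 𝕏 × 𝕐 × 𝕊 → ℝ) (s : 𝕊) : fS p s = ∑ x, fXS p x s := rfl

lemma fS_eq_sum_fYS (p : 𝕏 × 𝕐 × 𝕊 → ℝ) (s : 𝕊) : fS p s = ∑ y, fYS p y s :=
  Finset.sum_comm

lemma fXS_nonneg (p : 𝕏 × 𝕐 × 𝕊 → ℝ) (hp : ∀ w, 0 ≤ p w) (x : 𝕏) (s : 𝕊) : 0 ≤ fXS p x s :=
  Finset.sum_nonneg fun _ _ => hp _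

lemma fYS_nonneg (p : 𝕏 × 𝕐 × 𝕊 → ℝ) (hp : ∀ w, 0 ≤ p w) (y : 𝕐) (s : 𝕊) : 0 ≤ fYS p y s :=
  Finset.sum_nonneg fun _ _ => hp _

lemma fS_nonneg (p : 𝕏 × 𝕐 × 𝕊 → ℝ) (hp : ∀ w, 0 ≤ p w) (s : 𝕊) : 0 ≤ fS p s :=
  Finset.sum_nonneg fun _ _ => Finset.sum_nonneg fun _ _ => hp _

lemma le_fXS (p : 𝕏 × 𝕐 × 𝕊 → ℝ) (hp : ∀ w, 0 ≤ p w) (x : 𝕏) (y : 𝕐) (s : 𝕊) :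
    p (x, y, s) ≤ fXS p x s :=
  Finset.single_le_sum (f := fun y' => p (x, y', s)) (fun _ _ => hp _) (Finset.mem_univ y)

lemma le_fYS (p : 𝕏 × 𝕐 × 𝕊 → ℝ) (hp : ∀ w, 0 ≤ p w) (x : 𝕏) (y : 𝕐) (s : 𝕊) :
    p (x, y, s) ≤ fYS p y s :=
  Finset.single_le_sum (f := fun x' => p (x', y, s)) (fun _ _ => hp _) (Finset.mem_univ x)

lemma fXS_le_fS (p : 𝕏 × 𝕐 × 𝕊 → ℝ) (hp : ∀ w, 0 ≤ p w) (x : 𝕏) (s : 𝕊) :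
    fXS p x s ≤ fS p s := by
  rw [fS_eq_sum_fXS]
  exact Finset.single_le_sum (fun i _ => fXS_nonneg p hp i s) (Finset.mem_univ x)

lemma fYS_le_fS (p : 𝕏 × 𝕐 × 𝕊 → ℝ) (hp : ∀ w, 0 ≤ p w) (y : 𝕐) (s : 𝕊) :
    fYS p y s ≤ fS p s := by
  rw [fS_eq_sum_fYS]
  exact Finset.single_le_sum (fun i _ => fYS_nonneg p hp i s) (Finset.mem_univ y)

/-- Nonnegativity of CMI (only needs nonnegativity of the pmf). -/
lemma CMI3_nonneg (q : 𝕏 × 𝕐 × 𝕊 → ℝ) (h0 : ∀ w, 0 ≤ q w) : 0 ≤ CMI3 q := by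
  have hterm : ∀ x y s, q (x, y, s) - fXS q x s * fYS q y s / fS q s ≤
      q (x, y, s) * Real.log ((q (x, y, s) * fS q s) / (fXS q x s * fYS q y s)) := by
    intro x y s
    rcases eq_or_lt_of_le (h0 (x, y, s)) with hq | hq
    · rw [← hq]
      simp only [zero_mul, zero_sub, neg_nonpos, sub_zero]
      have : 0 ≤ fXS q x s * fYS q y s / fS q s :=
        div_nonneg (mul_nonneg (fXS_nonneg q h0 x s) (fYS_nonneg q h0 y s)) (fS_nonneg q h0 s)
      linarith
    · have hX : 0 < fXS q x s := lt_of_lt_of_le hq (le_fXS q h0 x y s)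
      have hY : 0 < fYS q y s := lt_of_lt_of_le hq (le_fYS q h0 x y s)
      have hF : 0 < fS q s := lt_of_lt_of_le hX (fXS_le_fS q h0 x s)
      have hlog : Real.log (fXS q x s * fYS q y s / (q (x, y, s) * fS q s)) ≤
          fXS q x s * fYS q y s / (q (x, y, s) * fS q s) - 1 :=
        Real.log_le_sub_one_of_pos (by positivity)
      have e : Real.log ((q (x, y, s) * fS q s) / (fXS q x s * fYS q y s)) =
          - Real.log (fXS q x s * fYS q y s / (q (x, y, s) * fS q s)) := by
        rw [← Real.log_inv, inv_div]
      rw [e]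
      have := mul_le_mul_of_nonneg_left hlog hq.le
      have key : q (x, y, s) * (fXS q x s * fYS q y s / (q (x, y, s) * fS q s) - 1) =
          fXS q x s * fYS q y s / fS q s - q (x, y, s) := by
        field_simp
      nlinarith [this]
  have hsum : ∑ x, ∑ y, ∑ s, (q (x, y, s) - fXS q x s * fYS q y s / fS q s) ≤ CMI3 q := by
    apply Finset.sum_le_sum; intro x _
    apply Finset.sum_le_sum; intro y _
    apply Finset.sum_le_sum; intro s _
    exact hterm x y s
  have hsplit : ∑ x, ∑ y, ∑ s, (q (x, y, s) - fXS q x s * fYS q y s / fS q s) =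
      (∑ s, fS q s) - ∑ s, fS q s * fS q s / fS q s := by
    simp only [Finset.sum_sub_distrib]
    congr 1
    · rw [show (∑ x, ∑ y, ∑ s, q (x, y, s)) = ∑ x, ∑ s, ∑ y, q (x, y, s) from
        Finset.sum_congr rfl (fun x _ => Finset.sum_comm), Finset.sum_comm]
      rfl
    · rw [show (∑ x, ∑ y, ∑ s, fXS q x s * fYS q y s / fS q s)
          = ∑ x, ∑ s, ∑ y, fXS q x s * fYS q y s / fS q s from
        Finset.sum_congr rfl (fun x _ => Finset.sum_comm), Finset.sum_comm]
      apply Finset.sum_congr rfl; intro s _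
      simp only [← Finset.sum_div]
      have key : (∑ x, ∑ y, fXS q x s * fYS q y s) = fS q s * fS q s := by
        simp only [← Finset.mul_sum]
        rw [← Finset.sum_mul, ← fS_eq_sum_fXS, ← fS_eq_sum_fYS]
      rw [key]
  have hfinal : (∑ s, fS q s) - (∑ s, fS q s * fS q s / fS q s) ≥ 0 := by
    rw [ge_iff_le, sub_nonneg]
    apply Finset.sum_le_sum; intro s _
    rcases eq_or_ne (fS q s) 0 with h | h
    · rw [h]; simp
    · rw [mul_div_assoc, div_self h, mul_one]
  calc (0:ℝ) ≤ ∑ x, ∑ y, ∑ s, (q (x, y, s) - fXS q x s * fYS q y s / fS q s) := by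
        rw [hsplit]; linarith
    _ ≤ CMI3 q := hsum

section eps
variable (p : 𝕏 × 𝕐 × 𝕊 → ℝ) (qU : 𝕏 → ℝ) (ε : ℝ)

lemma fYS_eps (hqU1 : ∑ x, qU x = 1) (y : 𝕐) (s : 𝕊) :
    fYS (epsNoise p qU ε) y s = fYS p y s := by
  simp only [fYS, epsNoise]
  rw [Finset.sum_add_distrib, ← Finset.mul_sum, ← Finset.sum_mul]
  have : (∑ x, ε * qU x) = ε := by rw [← Finset.mul_sum, hqU1, mul_one]
  rw [this]
  show (1 - ε) * fYS p y s + ε * fYS p y s = fYS p y s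
  ring

lemma fXS_eps (x : 𝕏) (s : 𝕊) :
    fXS (epsNoise p qU ε) x s = (1 - ε) * fXS p x s + ε * qU x * fS p s := by
  simp only [fXS, epsNoise]
  rw [Finset.sum_add_distrib, ← Finset.mul_sum, ← Finset.mul_sum]
  congr 1
  rw [fS_eq_sum_fYS]

lemma fS_eps (hqU1 : ∑ x, qU x = 1) (s : 𝕊) :
    fS (epsNoise p qU ε) s = fS p s := by
  rw [fS_eq_sum_fYS, fS_eq_sum_fYS p s]
  exact Finset.sum_congr rfl fun y _ => fYS_eps p qU ε hqU1 y s

end eps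

/-- Main estimate: noising contracts CMI by at least a factor `1 - ε`. -/
lemma CMI3_eps_le (p : 𝕏 × 𝕐 × 𝕊 → ℝ) (hp0 : ∀ w, 0 ≤ p w)
    (qU : 𝕏 → ℝ) (hqU : ∀ x, 0 < qU x) (hqU1 : ∑ x, qU x = 1)
    (ε : ℝ) (hε0 : 0 < ε) (hε1 : ε ≤ 1) :
    CMI3 (epsNoise p qU ε) ≤ (1 - ε) * CMI3 p := by
  set q := epsNoise p qU ε with hq_def
  have hrhs : (1 - ε) * CMI3 p = ∑ x, ∑ y, ∑ s, (1 - ε) *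
      (p (x, y, s) * Real.log ((p (x, y, s) * fS p s) / (fXS p x s * fYS p y s))) := by
    rw [CMI3]; simp only [Finset.mul_sum]
  rw [hrhs, CMI3]
  apply Finset.sum_le_sum; intro x _
  apply Finset.sum_le_sum; intro y _
  apply Finset.sum_le_sum; intro s _
  by_cases hY : fYS p y s = 0
  · have hP : p (x, y, s) = 0 :=
      le_antisymm (hY ▸ le_fYS p hp0 x y s) (hp0 _)
    have hq0 : q (x, y, s) = 0 := by
      show (1 - ε) * p (x, y, s) + ε * qU x * fYS p y s = 0
      rw [hP, hY]; ring
    rw [hq0, hP]; simp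
  · have hY' : 0 < fYS p y s := lt_of_le_of_ne (fYS_nonneg p hp0 y s) (Ne.symm hY)
    have hF : 0 < fS p s := lt_of_lt_of_le hY' (fYS_le_fS p hp0 y s)
    have h1ε : 0 ≤ 1 - ε := by linarith
    set P := p (x, y, s) with hP_def
    set a := (1 - ε) * P with ha_def
    set c := ε * qU x * fYS p y s with hc_def
    set b := (1 - ε) * (fXS p x s * fYS p y s / fS p s) with hb_def
    have hc : 0 < c := mul_pos (mul_pos hε0 (hqU x)) hY'
    have ha : 0 ≤ a := mul_nonneg h1ε (hp0 _)
    have hb : 0 ≤ b := mul_nonneg h1ε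
      (div_nonneg (mul_nonneg (fXS_nonneg p hp0 x s) hY'.le) hF.le)
    have hq_eq : q (x, y, s) = a + c := rfl
    have hden : fXS q x s * fYS q y s / fS q s = b + c := by
      rw [hq_def, fXS_eps, fYS_eps p qU ε hqU1, fS_eps p qU ε hqU1]
      rw [hb_def, hc_def]
      field_simp
    have harg : q (x, y, s) * fS q s / (fXS q x s * fYS q y s) = (a + c) / (b + c) := by
      rw [hq_eq, ← hden, div_div_eq_mul_div]
    have hab : 0 < a → 0 < b := by
      intro hapos
      rcases mul_pos_iff.mp (ha_def ▸ hapos) with ⟨h1, h2⟩ | ⟨h1, h2⟩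
      · exact mul_pos h1 (div_pos (mul_pos (lt_of_lt_of_le h2 (le_fXS p hp0 x y s)) hY') hF)
      · linarith [hp0 (x, y, s)]
    calc q (x, y, s) * Real.log (q (x, y, s) * fS q s / (fXS q x s * fYS q y s))
        = (a + c) * Real.log ((a + c) / (b + c)) := by rw [harg, hq_eq]
      _ ≤ a * Real.log (a / b) := logsum2 a b c ha hb hc hab
      _ = (1 - ε) * (P * Real.log (P * fS p s / (fXS p x s * fYS p y s))) := by
          rcases eq_or_lt_of_le h1ε with he | he
          · rw [ha_def, ← he]; ring_nf
          rcases eq_or_lt_of_le (hp0 (x, y, s)) with hP0 | hP0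
          · rw [ha_def, hP_def, ← hP0]; ring_nf
          · have hX : 0 < fXS p x s := lt_of_lt_of_le hP0 (le_fXS p hp0 x y s)
            have heq : a / b = P * fS p s / (fXS p x s * fYS p y s) := by
              rw [ha_def, hb_def, mul_div_mul_left _ _ (ne_of_gt he),
                div_div_eq_mul_div]
            rw [heq, ha_def]; ring

/-- Lemma 3, strict data processing inequality, discrete case: for
`0 < ε ≤ 1` and a noise pmf `qU` positive on a finite value set containing the range of
`X`, one has `CMI(X^ε, Y | S₁) ≤ CMI(X, Y | S₁)`, with equality iff
`CMI(X, Y | S₁) = 0`. -/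
theorem strict_data_processing_inequality
    (p : 𝕏 × 𝕐 × 𝕊 → ℝ) (hp : IsDist p)
    (qU : 𝕏 → ℝ) (hqU : ∀ x, 0 < qU x) (hqU1 : ∑ x, qU x = 1)
    (ε : ℝ) (hε0 : 0 < ε) (hε1 : ε ≤ 1) :
    CMI3 (epsNoise p qU ε) ≤ CMI3 p ∧
      (CMI3 (epsNoise p qU ε) = CMI3 p ↔ CMI3 p = 0) := by
  obtain ⟨h0, -⟩ := hp
  have hmain := CMI3_eps_le p h0 qU hqU hqU1 ε hε0 hε1
  have hnn : 0 ≤ CMI3 p := CMI3_nonneg p h0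
  have hq0 : ∀ w, 0 ≤ epsNoise p qU ε w := fun w =>
    add_nonneg (mul_nonneg (by linarith) (h0 w))
      (mul_nonneg (mul_nonneg hε0.le (hqU _).le) (fYS_nonneg p h0 _ _))
  have hnn' : 0 ≤ CMI3 (epsNoise p qU ε) := CMI3_nonneg _ hq0
  refine ⟨by nlinarith, ⟨fun h => by nlinarith, fun h => ?_⟩⟩
  rw [h]
  have : CMI3 (epsNoise p qU ε) ≤ 0 := by rw [h] at hmain; linarith
  linarith

end
end
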